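/- arXiv:1312.7418 — 7 statements merged into one kernel-verified Lean document; each statement's English description precedes it below -/
import Mathlib

section
/- Let G ⊂ Diff^1_+([0,1]) be a group such that there exists a sequence h_n ∈ Diff^1_+([0,1]) with h_n g h_n^{-1} → id in the C^1 topology for every g ∈ G. Then there exists a C^1-continuous path h_t ∈ Diff^1_+([0,1]), t ∈ [0,1), such that h_t g h_t^{-1} → id in the C^1 topology as t → 1, for every g ∈ G. -/
open Set Filter

noncomputable section

/-- `f` is an orientation-preserving C¹ diffeomorphism of `[0,1]`, modeled as a
bijection of `ℝ` that equals the identity outside `[0,1]`. -/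
def DiffOnIcc (f : Equiv.Perm ℝ) : Prop :=
  (∀ x : ℝ, x ∉ Icc (0:ℝ) 1 → f x = x) ∧
  MapsTo ⇑f (Icc (0:ℝ) 1) (Icc (0:ℝ) 1) ∧
  StrictMonoOn ⇑f (Icc (0:ℝ) 1) ∧
  ContDiffOn ℝ 1 ⇑f (Icc (0:ℝ) 1) ∧
  ContDiffOn ℝ 1 ⇑f.symm (Icc (0:ℝ) 1) ∧
  ∀ x ∈ Icc (0:ℝ) 1, 0 < derivWithin ⇑f (Icc (0:ℝ) 1) x

/-- The derivative (within `[0,1]`) of a diffeomorphism of `[0,1]`. -/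
def D (f : Equiv.Perm ℝ) (x : ℝ) : ℝ := derivWithin ⇑f (Icc (0:ℝ) 1) x

/-- `f` is an orientation-preserving homeomorphism of `[0,1]`, modeled as a
bijection of `ℝ` that equals the identity outside `[0,1]`. -/
def HomeoOnIcc (f : Equiv.Perm ℝ) : Prop :=
  (∀ x : ℝ, x ∉ Icc (0:ℝ) 1 → f x = x) ∧
  MapsTo ⇑f (Icc (0:ℝ) 1) (Icc (0:ℝ) 1) ∧
  StrictMonoOn ⇑f (Icc (0:ℝ) 1) ∧
  ContinuousOn ⇑f (Icc (0:ℝ) 1)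

/-- `(a,b)` is a connected component of `[0,1] \ Fix f`: `a`, `b` are fixed and
there is no fixed point in between. -/
def IsCompFix (f : Equiv.Perm ℝ) (a b : ℝ) : Prop :=
  a ∈ Icc (0:ℝ) 1 ∧ b ∈ Icc (0:ℝ) 1 ∧ a < b ∧ f a = a ∧ f b = b ∧
  ∀ x ∈ Ioo a b, f x ≠ x

/-- `{a,b}` is a pair of successive fixed points of the group `G`. -/
def SuccFix (G : Subgroup (Equiv.Perm ℝ)) (a b : ℝ) : Prop :=
  ∃ g ∈ G, IsCompFix g a b

open Topology

lemma udI : UniqueDiffOn ℝ (Icc (0:ℝ) 1) := uniqueDiffOn_Icc one_pos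

namespace DiffOnIcc

variable {f g : Equiv.Perm ℝ}

lemma out (hf : DiffOnIcc f) : ∀ x : ℝ, x ∉ Icc (0:ℝ) 1 → f x = x := hf.1
lemma mapsTo (hf : DiffOnIcc f) : MapsTo ⇑f (Icc (0:ℝ) 1) (Icc (0:ℝ) 1) := hf.2.1
lemma mono (hf : DiffOnIcc f) : StrictMonoOn ⇑f (Icc (0:ℝ) 1) := hf.2.2.1
lemma cd (hf : DiffOnIcc f) : ContDiffOn ℝ 1 ⇑f (Icc (0:ℝ) 1) := hf.2.2.2.1
lemma cdsymm (hf : DiffOnIcc f) : ContDiffOn ℝ 1 ⇑f.symm (Icc (0:ℝ) 1) := hf.2.2.2.2.1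
lemma Dpos (hf : DiffOnIcc f) : ∀ x ∈ Icc (0:ℝ) 1, 0 < D f x := hf.2.2.2.2.2

lemma symm_mapsTo (hf : DiffOnIcc f) : MapsTo ⇑f.symm (Icc (0:ℝ) 1) (Icc (0:ℝ) 1) := by
  intro y hy
  by_contra hsy
  have h1 : f (f.symm y) = f.symm y := hf.out _ hsy
  rw [Equiv.apply_symm_apply] at h1
  rw [← h1] at hsy
  exact hsy hy

lemma dwa (hf : DiffOnIcc f) {x : ℝ} (hx : x ∈ Icc (0:ℝ) 1) :
    DifferentiableWithinAt ℝ ⇑f (Icc (0:ℝ) 1) x :=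
  (hf.cd.differentiableOn one_ne_zero) x hx

lemma dwa_symm (hf : DiffOnIcc f) {x : ℝ} (hx : x ∈ Icc (0:ℝ) 1) :
    DifferentiableWithinAt ℝ ⇑f.symm (Icc (0:ℝ) 1) x :=
  (hf.cdsymm.differentiableOn one_ne_zero) x hx

lemma contD (hf : DiffOnIcc f) : ContinuousOn (D f) (Icc (0:ℝ) 1) :=
  hf.cd.continuousOn_derivWithin udI le_rfl

lemma fix0 (hf : DiffOnIcc f) : f 0 = 0 := by
  have hx : f.symm 0 ∈ Icc (0:ℝ) 1 := hf.symm_mapsTo (by norm_num)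
  have h0 : (0:ℝ) ∈ Icc (0:ℝ) 1 := by norm_num
  rcases lt_or_eq_of_le hx.1 with hlt | heq
  · have := hf.mono h0 hx hlt
    rw [Equiv.apply_symm_apply] at this
    exact absurd this (not_lt.2 (hf.mapsTo h0).1)
  · have := congrArg f heq
    rwa [Equiv.apply_symm_apply] at this

lemma fix1 (hf : DiffOnIcc f) : f 1 = 1 := by
  have hx : f.symm 1 ∈ Icc (0:ℝ) 1 := hf.symm_mapsTo (by norm_num)
  have h1 : (1:ℝ) ∈ Icc (0:ℝ) 1 := by norm_num
  rcases lt_or_eq_of_le hx.2 with hlt | heq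
  · have := hf.mono hx h1 hlt
    rw [Equiv.apply_symm_apply] at this
    exact absurd this (not_lt.2 (hf.mapsTo h1).2)
  · have := congrArg f heq
    rw [Equiv.apply_symm_apply] at this
    exact this.symm

end DiffOnIcc

lemma D_mul {P Q : Equiv.Perm ℝ} (hP : DiffOnIcc P) (hQ : DiffOnIcc Q)
    {x : ℝ} (hx : x ∈ Icc (0:ℝ) 1) : D (P * Q) x = D P (Q x) * D Q x := by
  have hco : ⇑(P * Q) = ⇑P ∘ ⇑Q := rfl
  unfold D
  rw [hco]
  exact derivWithin_comp x (hP.dwa (hQ.mapsTo hx)) (hQ.dwa hx) hQ.mapsTo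

lemma coe_inv (f : Equiv.Perm ℝ) : ⇑(f⁻¹) = ⇑f.symm := rfl

lemma D_one {x : ℝ} (hx : x ∈ Icc (0:ℝ) 1) : D (1 : Equiv.Perm ℝ) x = 1 := by
  have : ⇑(1 : Equiv.Perm ℝ) = id := rfl
  unfold D
  rw [this]
  exact derivWithin_id x _ (udI x hx)

lemma D_inv_mul {f : Equiv.Perm ℝ} (hf : DiffOnIcc f) {x : ℝ} (hx : x ∈ Icc (0:ℝ) 1) :
    D f⁻¹ (f x) * D f x = 1 := by
  have hco : ⇑(f⁻¹) ∘ ⇑f = ⇑(1 : Equiv.Perm ℝ) := by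
    funext y; simp [coe_inv]
  have h1 : derivWithin (⇑(f⁻¹) ∘ ⇑f) (Icc (0:ℝ) 1) x
      = D f⁻¹ (f x) * D f x := by
    unfold D
    exact derivWithin_comp x (by rw [coe_inv]; exact hf.dwa_symm (hf.mapsTo hx))
      (hf.dwa hx) hf.mapsTo
  rw [hco] at h1
  rw [← h1]
  exact D_one hx

lemma D_inv_apply {f : Equiv.Perm ℝ} (hf : DiffOnIcc f) {x : ℝ} (hx : x ∈ Icc (0:ℝ) 1) :
    D f⁻¹ (f x) = (D f x)⁻¹ :=
  eq_inv_of_mul_eq_one_left (D_inv_mul hf hx)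

lemma D_inv_pos {f : Equiv.Perm ℝ} (hf : DiffOnIcc f) {y : ℝ} (hy : y ∈ Icc (0:ℝ) 1) :
    0 < D f⁻¹ y := by
  have hx : f.symm y ∈ Icc (0:ℝ) 1 := hf.symm_mapsTo hy
  have : D f⁻¹ (f (f.symm y)) = (D f (f.symm y))⁻¹ := D_inv_apply hf hx
  rw [Equiv.apply_symm_apply] at this
  rw [this]
  exact inv_pos.2 (hf.Dpos _ hx)

lemma DiffOnIcc.inv {f : Equiv.Perm ℝ} (hf : DiffOnIcc f) : DiffOnIcc f⁻¹ := by
  refine ⟨?_, ?_, ?_, ?_, ?_, ?_⟩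
  · intro x hx
    have := hf.out x hx
    calc f⁻¹ x = f.symm (f x) := by rw [this]; rfl
    _ = x := Equiv.symm_apply_apply f x
  · exact hf.symm_mapsTo
  · intro x hx y hy hxy
    by_contra hle
    push_neg at hle
    have : f (f.symm y) ≤ f (f.symm x) :=
      (hf.mono.monotoneOn) (hf.symm_mapsTo hy) (hf.symm_mapsTo hx) hle
    rw [Equiv.apply_symm_apply, Equiv.apply_symm_apply] at this
    exact absurd hxy (not_lt.2 this)
  · exact hf.cdsymm
  · have : ⇑(f⁻¹).symm = ⇑f := rfl
    rw [this]; exact hf.cd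
  · exact fun y hy => D_inv_pos hf hy

lemma DiffOnIcc.mul {P Q : Equiv.Perm ℝ} (hP : DiffOnIcc P) (hQ : DiffOnIcc Q) :
    DiffOnIcc (P * Q) := by
  have hco : ⇑(P * Q) = ⇑P ∘ ⇑Q := rfl
  refine ⟨?_, ?_, ?_, ?_, ?_, ?_⟩
  · intro x hx
    show P (Q x) = x
    rw [hQ.out x hx, hP.out x hx]
  · rw [hco]; exact hP.mapsTo.comp hQ.mapsTo
  · rw [hco]; exact hP.mono.comp hQ.mono hQ.mapsTo
  · rw [hco]; exact hP.cd.comp hQ.cd hQ.mapsTo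
  · have : ⇑(P * Q).symm = ⇑Q.symm ∘ ⇑P.symm := rfl
    rw [this]
    exact hQ.cdsymm.comp hP.cdsymm hP.symm_mapsTo
  · intro x hx
    show 0 < D (P * Q) x
    rw [D_mul hP hQ hx]
    exact mul_pos (hP.Dpos _ (hQ.mapsTo hx)) (hQ.Dpos _ hx)
lemma convex_pos {s a b : ℝ} (hs : s ∈ Icc (0:ℝ) 1) (ha : 0 < a) (hb : 0 < b) :
    0 < (1 - s) * a + s * b := by
  rcases eq_or_lt_of_le hs.1 with h0 | h0
  · rw [← h0]; simpa using ha
  · have h1 : 0 < s * b := mul_pos h0 hb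
    have h2 : 0 ≤ (1 - s) * a := mul_nonneg (by linarith [hs.2]) ha.le
    linarith

lemma convex_lt {s a b ε : ℝ} (hs : s ∈ Icc (0:ℝ) 1) (ha : a < ε) (hb : b < ε)
    (ha0 : 0 ≤ a) (hb0 : 0 ≤ b) : (1 - s) * a + s * b < ε := by
  rcases eq_or_lt_of_le hs.1 with h0 | h0
  · rw [← h0]; simpa using ha
  · have h1 : s * b < s * ε := by exact (mul_lt_mul_iff_right₀ h0).2 hb
    have h2 : (1 - s) * a ≤ (1 - s) * ε := by
      apply mul_le_mul_of_nonneg_left ha.le (by linarith [hs.2])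
    nlinarith

def mixF (A B : Equiv.Perm ℝ) (s x : ℝ) : ℝ := (1 - s) * A x + s * B x

section Mix

variable {A B : Equiv.Perm ℝ} {s : ℝ}
variable (hA : DiffOnIcc A) (hB : DiffOnIcc B) (hs : s ∈ Icc (0:ℝ) 1)
include hA hB hs

lemma mixF_out : ∀ x : ℝ, x ∉ Icc (0:ℝ) 1 → mixF A B s x = x := by
  intro x hx
  unfold mixF
  rw [hA.out x hx, hB.out x hx]; ring

lemma mixF_mapsTo : MapsTo (mixF A B s) (Icc (0:ℝ) 1) (Icc (0:ℝ) 1) := by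
  intro x hx
  have h1 := hA.mapsTo hx
  have h2 := hB.mapsTo hx
  constructor
  · have : 0 ≤ (1 - s) * A x := mul_nonneg (by linarith [hs.2]) h1.1
    have : 0 ≤ s * B x := mul_nonneg hs.1 h2.1
    unfold mixF; linarith
  · have : (1 - s) * A x ≤ (1 - s) * 1 := mul_le_mul_of_nonneg_left h1.2 (by linarith [hs.2])
    have : s * B x ≤ s * 1 := mul_le_mul_of_nonneg_left h2.2 hs.1
    unfold mixF; nlinarith

lemma mixF_monoIcc : StrictMonoOn (mixF A B s) (Icc (0:ℝ) 1) := by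
  intro x hx y hy hxy
  unfold mixF
  rcases eq_or_lt_of_le hs.1 with h0 | h0
  · rw [← h0]
    simpa using hA.mono hx hy hxy
  · have h1 : s * B x < s * B y := (mul_lt_mul_iff_right₀ h0).2 (hB.mono hx hy hxy)
    have h2 : (1 - s) * A x ≤ (1 - s) * A y :=
      mul_le_mul_of_nonneg_left (hA.mono hx hy hxy).le (by linarith [hs.2])
    linarith

lemma mixF_mono : StrictMono (mixF A B s) := by
  have key : ∀ x : ℝ, x ∉ Icc (0:ℝ) 1 → mixF A B s x = x := mixF_out hA hB hs
  intro x y hxy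
  by_cases hx : x ∈ Icc (0:ℝ) 1 <;> by_cases hy : y ∈ Icc (0:ℝ) 1
  · exact mixF_monoIcc hA hB hs hx hy hxy
  · -- x ∈ Icc, y ∉ Icc; since x < y and x ≥ 0, must have y > 1
    have hy1 : 1 < y := by
      simp only [mem_Icc, not_and_or, not_le] at hy
      rcases hy with h | h
      · linarith [hx.1]
      · exact h
    have := (mixF_mapsTo hA hB hs hx).2
    rw [key y hy]; linarith
  · have hx0 : x < 0 := by
      simp only [mem_Icc, not_and_or, not_le] at hx
      rcases hx with h | h
      · exact h
      · linarith [hy.2]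
    have := (mixF_mapsTo hA hB hs hy).1
    rw [key x hx]; linarith
  · rw [key x hx, key y hy]; exact hxy

lemma mixF_cd : ContDiffOn ℝ 1 (mixF A B s) (Icc (0:ℝ) 1) := by
  unfold mixF
  exact ((hA.cd.const_smul (1 - s)).add (hB.cd.const_smul s))

lemma mixF_fix0 : mixF A B s 0 = 0 := by
  unfold mixF; rw [hA.fix0, hB.fix0]; ring

lemma mixF_fix1 : mixF A B s 1 = 1 := by
  unfold mixF; rw [hA.fix1, hB.fix1]; ring

lemma mixF_surj : Function.Surjective (mixF A B s) := by
  intro y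
  by_cases hy : y ∈ Icc (0:ℝ) 1
  · have hc : ContinuousOn (mixF A B s) (Icc (0:ℝ) 1) := (mixF_cd hA hB hs).continuousOn
    have := intermediate_value_Icc (zero_le_one) hc
    rw [mixF_fix0 hA hB hs, mixF_fix1 hA hB hs] at this
    obtain ⟨x, _, hx⟩ := this hy
    exact ⟨x, hx⟩
  · exact ⟨y, mixF_out hA hB hs y hy⟩

end Mix

def mixPerm (A B : Equiv.Perm ℝ) (s : ℝ) (hA : DiffOnIcc A) (hB : DiffOnIcc B)
    (hs : s ∈ Icc (0:ℝ) 1) : Equiv.Perm ℝ :=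
  Equiv.ofBijective (mixF A B s) ⟨(mixF_mono hA hB hs).injective, mixF_surj hA hB hs⟩

lemma mixPerm_apply {A B : Equiv.Perm ℝ} {s : ℝ} (hA : DiffOnIcc A) (hB : DiffOnIcc B)
    (hs : s ∈ Icc (0:ℝ) 1) : ⇑(mixPerm A B s hA hB hs) = mixF A B s := rfl
section Mix2

variable {A B : Equiv.Perm ℝ} {s : ℝ}
variable (hA : DiffOnIcc A) (hB : DiffOnIcc B) (hs : s ∈ Icc (0:ℝ) 1)
include hA hB hs

lemma mixF_hasDeriv {x : ℝ} (hx : x ∈ Icc (0:ℝ) 1) :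
    HasDerivWithinAt (mixF A B s) ((1 - s) * D A x + s * D B x) (Icc (0:ℝ) 1) x := by
  have h1 : HasDerivWithinAt (⇑A) (D A x) (Icc (0:ℝ) 1) x := (hA.dwa hx).hasDerivWithinAt
  have h2 : HasDerivWithinAt (⇑B) (D B x) (Icc (0:ℝ) 1) x := (hB.dwa hx).hasDerivWithinAt
  exact (h1.const_mul (1 - s)).add (h2.const_mul s)

lemma D_mix {x : ℝ} (hx : x ∈ Icc (0:ℝ) 1) :
    D (mixPerm A B s hA hB hs) x = (1 - s) * D A x + s * D B x := by
  show derivWithin _ _ _ = _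
  rw [mixPerm_apply]
  exact (mixF_hasDeriv hA hB hs hx).derivWithin (udI x hx)

lemma D_mix_pos {x : ℝ} (hx : x ∈ Icc (0:ℝ) 1) :
    0 < D (mixPerm A B s hA hB hs) x := by
  rw [D_mix hA hB hs hx]
  exact convex_pos hs (hA.Dpos x hx) (hB.Dpos x hx)

lemma mixPerm_symm_cont : Continuous ⇑(mixPerm A B s hA hB hs).symm := by
  set M := mixPerm A B s hA hB hs
  set e := StrictMono.orderIsoOfSurjective (mixF A B s) (mixF_mono hA hB hs)
    (mixF_surj hA hB hs)
  have hcoe : ⇑M.symm = ⇑e.symm := by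
    funext y
    apply (mixF_mono hA hB hs).injective
    have h1 : mixF A B s (M.symm y) = y := M.apply_symm_apply y
    have h2 : mixF A B s (e.symm y) = y := by
      have := e.apply_symm_apply y
      rwa [show ∀ z, e z = mixF A B s z from fun z => rfl] at this
    rw [h1, h2]
  rw [hcoe]
  exact OrderIso.continuous e.symm

lemma mixPerm_symm_mapsTo :
    MapsTo ⇑(mixPerm A B s hA hB hs).symm (Icc (0:ℝ) 1) (Icc (0:ℝ) 1) := by
  intro y hy
  set M := mixPerm A B s hA hB hs
  by_contra hsy
  have h1 : M (M.symm y) = M.symm y := mixF_out hA hB hs _ hsy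
  rw [Equiv.apply_symm_apply] at h1
  rw [← h1] at hsy
  exact hsy hy

lemma mixPerm_symm_hasDeriv {y : ℝ} (hy : y ∈ Icc (0:ℝ) 1) :
    HasDerivWithinAt ⇑(mixPerm A B s hA hB hs).symm
      (D (mixPerm A B s hA hB hs) ((mixPerm A B s hA hB hs).symm y))⁻¹ (Icc (0:ℝ) 1) y := by
  set M := mixPerm A B s hA hB hs with hM
  set x := M.symm y with hxdef
  have hx : x ∈ Icc (0:ℝ) 1 := mixPerm_symm_mapsTo hA hB hs hy
  have hMx : M x = y := M.apply_symm_apply y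
  rw [hasDerivWithinAt_iff_tendsto_slope]
  have T1 : Tendsto (⇑M.symm) (𝓝[Icc (0:ℝ) 1 \ {y}] y) (𝓝[Icc (0:ℝ) 1 \ {x}] x) := by
    apply ContinuousWithinAt.tendsto_nhdsWithin
      ((mixPerm_symm_cont hA hB hs).continuousWithinAt)
    intro z hz
    refine ⟨mixPerm_symm_mapsTo hA hB hs hz.1, ?_⟩
    simp only [mem_singleton_iff] at hz ⊢
    intro hc
    exact hz.2 (by rw [← hMx, ← hc, Equiv.apply_symm_apply]; exact mem_singleton _)
  have T2 : Tendsto (slope (⇑M) x) (𝓝[Icc (0:ℝ) 1 \ {x}] x) (𝓝 (D M x)) := by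
    have hd : HasDerivWithinAt (⇑M) (D M x) (Icc (0:ℝ) 1) x := by
      rw [hM, mixPerm_apply, D_mix hA hB hs hx]
      exact mixF_hasDeriv hA hB hs hx
    exact hasDerivWithinAt_iff_tendsto_slope.1 hd
  have hDne : D M x ≠ 0 := (D_mix_pos hA hB hs hx).ne'
  have T3 : Tendsto (fun z => (slope (⇑M) x (M.symm z))⁻¹) (𝓝[Icc (0:ℝ) 1 \ {y}] y)
      (𝓝 (D M x)⁻¹) := (T2.inv₀ hDne).comp T1
  apply T3.congr'
  filter_upwards [self_mem_nhdsWithin] with z hz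
  have hzy : z ≠ y := by simpa using hz.2
  have hMw : M (M.symm z) = z := M.apply_symm_apply z
  show (slope (⇑M) x (M.symm z))⁻¹ = slope (⇑M.symm) y z
  rw [slope_def_field, slope_def_field, hMw, hMx, inv_div, hxdef]

end Mix2
section Mix3

variable {A B : Equiv.Perm ℝ} {s : ℝ}
variable (hA : DiffOnIcc A) (hB : DiffOnIcc B) (hs : s ∈ Icc (0:ℝ) 1)
include hA hB hs

lemma mixPerm_symm_cd : ContDiffOn ℝ 1 ⇑(mixPerm A B s hA hB hs).symm (Icc (0:ℝ) 1) := by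
  set M := mixPerm A B s hA hB hs with hM
  have hdiff : DifferentiableOn ℝ ⇑M.symm (Icc (0:ℝ) 1) := fun y hy =>
    (mixPerm_symm_hasDeriv hA hB hs hy).differentiableWithinAt
  have hDeq : ∀ y ∈ Icc (0:ℝ) 1, derivWithin ⇑M.symm (Icc (0:ℝ) 1) y
      = (D M (M.symm y))⁻¹ := fun y hy =>
    (mixPerm_symm_hasDeriv hA hB hs hy).derivWithin (udI y hy)
  have h1 : (1 : WithTop ℕ∞) = 0 + 1 := by norm_num
  rw [h1, contDiffOn_succ_iff_derivWithin udI]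
  refine ⟨hdiff, by simp, ?_⟩
  rw [contDiffOn_zero]
  have hDM : ContinuousOn (D M) (Icc (0:ℝ) 1) := by
    show ContinuousOn (derivWithin ⇑M (Icc (0:ℝ) 1)) (Icc (0:ℝ) 1)
    rw [hM, mixPerm_apply]
    exact (mixF_cd hA hB hs).continuousOn_derivWithin udI le_rfl
  have hc : ContinuousOn (fun y => (D M (M.symm y))⁻¹) (Icc (0:ℝ) 1) := by
    apply ContinuousOn.inv₀
    · exact hDM.comp ((mixPerm_symm_cont hA hB hs).continuousOn)
        (mixPerm_symm_mapsTo hA hB hs)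
    · intro y hy
      exact (D_mix_pos hA hB hs (mixPerm_symm_mapsTo hA hB hs hy)).ne'
  exact hc.congr hDeq

lemma mixPerm_diff : DiffOnIcc (mixPerm A B s hA hB hs) :=
  ⟨mixF_out hA hB hs, mixF_mapsTo hA hB hs, mixF_monoIcc hA hB hs, mixF_cd hA hB hs,
    mixPerm_symm_cd hA hB hs, fun x hx => D_mix_pos hA hB hs hx⟩

end Mix3
lemma wsum_lt {w1 w2 p q ε : ℝ} (h1 : 0 ≤ w1) (h2 : 0 ≤ w2) (hpos : 0 < w1 + w2)
    (hp : p < ε) (hq : q < ε) : w1 * p + w2 * q < (w1 + w2) * ε := by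
  rcases lt_or_ge 0 w1 with hw | hw
  · have k1 : w1 * p < w1 * ε := (mul_lt_mul_iff_right₀ hw).2 hp
    have k2 : w2 * q ≤ w2 * ε := mul_le_mul_of_nonneg_left hq.le h2
    nlinarith
  · have hw1 : w1 = 0 := le_antisymm hw h1
    have hw2 : 0 < w2 := by rw [hw1] at hpos; linarith
    have k2 : w2 * q < w2 * ε := (mul_lt_mul_iff_right₀ hw2).2 hq
    rw [hw1]; nlinarith

lemma conj_apply {A f : Equiv.Perm ℝ} (x : ℝ) : (A * f * A⁻¹) (A x) = A (f x) := by
  show A (f (A⁻¹ (A x))) = A (f x)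
  rw [show (A⁻¹ : Equiv.Perm ℝ) (A x) = x from Equiv.symm_apply_apply A x]

lemma conj_deriv {A f : Equiv.Perm ℝ} (hA : DiffOnIcc A) (hf : DiffOnIcc f)
    {x : ℝ} (hx : x ∈ Icc (0:ℝ) 1) :
    D (A * f * A⁻¹) (A x) * D A x = D A (f x) * D f x := by
  have hAx : A x ∈ Icc (0:ℝ) 1 := hA.mapsTo hx
  have h1 : D (A * f * A⁻¹) (A x) = D (A * f) ((A⁻¹ : Equiv.Perm ℝ) (A x)) * D A⁻¹ (A x) :=
    D_mul (hA.mul hf) hA.inv hAx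
  have h2 : (A⁻¹ : Equiv.Perm ℝ) (A x) = x := Equiv.symm_apply_apply A x
  rw [h2] at h1
  have h3 : D (A * f) x = D A (f x) * D f x := D_mul hA hf hx
  have h4 : D A⁻¹ (A x) = (D A x)⁻¹ := D_inv_apply hA hx
  rw [h1, h3, h4]
  have hne := (hA.Dpos x hx).ne'
  field_simp

lemma mix_conj_bound {A B f : Equiv.Perm ℝ} {s : ℝ}
    (hA : DiffOnIcc A) (hB : DiffOnIcc B) (hf : DiffOnIcc f) (hs : s ∈ Icc (0:ℝ) 1)
    {ε : ℝ}
    (hAc : ∀ z ∈ Icc (0:ℝ) 1, |(A * f * A⁻¹) z - z| < ε ∧ |D (A * f * A⁻¹) z - 1| < ε)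
    (hBc : ∀ z ∈ Icc (0:ℝ) 1, |(B * f * B⁻¹) z - z| < ε ∧ |D (B * f * B⁻¹) z - 1| < ε) :
    ∀ z ∈ Icc (0:ℝ) 1,
      |(mixPerm A B s hA hB hs * f * (mixPerm A B s hA hB hs)⁻¹) z - z| < ε ∧
      |D (mixPerm A B s hA hB hs * f * (mixPerm A B s hA hB hs)⁻¹) z - 1| < ε := by
  intro z hz
  set M := mixPerm A B s hA hB hs with hM
  have hMdiff : DiffOnIcc M := mixPerm_diff hA hB hs
  set x := M.symm z with hxdef
  have hx : x ∈ Icc (0:ℝ) 1 := hMdiff.symm_mapsTo hz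
  have hMx : M x = z := M.apply_symm_apply z
  have hfx : f x ∈ Icc (0:ℝ) 1 := hf.mapsTo hx
  have hAx : A x ∈ Icc (0:ℝ) 1 := hA.mapsTo hx
  have hBx : B x ∈ Icc (0:ℝ) 1 := hB.mapsTo hx
  have hCz : (M * f * M⁻¹) z = M (f x) := by rw [← hMx]; exact conj_apply x
  have hAval : A (f x) - A x = (A * f * A⁻¹) (A x) - A x := by rw [conj_apply]
  have hBval : B (f x) - B x = (B * f * B⁻¹) (B x) - B x := by rw [conj_apply]
  have hav : |A (f x) - A x| < ε := by rw [hAval]; exact (hAc _ hAx).1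
  have hbv : |B (f x) - B x| < ε := by rw [hBval]; exact (hBc _ hBx).1
  have hε : 0 < ε := lt_of_le_of_lt (abs_nonneg _) hav
  constructor
  · rw [hCz, ← hMx]
    have hMfx : M (f x) = (1 - s) * A (f x) + s * B (f x) := rfl
    have hMxx : M x = (1 - s) * A x + s * B x := rfl
    rw [hMfx, hMxx]
    have heq : (1 - s) * A (f x) + s * B (f x) - ((1 - s) * A x + s * B x)
        = (1 - s) * (A (f x) - A x) + s * (B (f x) - B x) := by ring
    rw [heq]
    calc |(1 - s) * (A (f x) - A x) + s * (B (f x) - B x)|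
        ≤ |(1 - s) * (A (f x) - A x)| + |s * (B (f x) - B x)| := abs_add_le _ _
      _ = (1 - s) * |A (f x) - A x| + s * |B (f x) - B x| := by
          rw [abs_mul, abs_mul, abs_of_nonneg (by linarith [hs.2] : (0:ℝ) ≤ 1 - s),
            abs_of_nonneg hs.1]
      _ < ε := convex_lt hs hav hbv (abs_nonneg _) (abs_nonneg _)
  · -- derivative estimate
    set a := D A x with ha
    set b := D B x with hb
    have hapos : 0 < a := hA.Dpos x hx
    have hbpos : 0 < b := hB.Dpos x hx
    set u := D (A * f * A⁻¹) (A x) with hu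
    set v := D (B * f * B⁻¹) (B x) with hv
    have hu1 : |u - 1| < ε := (hAc _ hAx).2
    have hv1 : |v - 1| < ε := (hBc _ hBx).2
    have hDMx : D M x = (1 - s) * a + s * b := D_mix hA hB hs hx
    have hDMfx : D M (f x) = (1 - s) * D A (f x) + s * D B (f x) := D_mix hA hB hs hfx
    set dm := (1 - s) * a + s * b with hdm
    have hdmpos : 0 < dm := convex_pos hs hapos hbpos
    have hkey : D (M * f * M⁻¹) z * dm = (1 - s) * (u * a) + s * (v * b) := by
      rw [← hMx, ← hDMx]
      rw [conj_deriv hMdiff hf hx, hDMfx]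
      have e1 : D A (f x) * D f x = u * a := (conj_deriv hA hf hx).symm
      have e2 : D B (f x) * D f x = v * b := (conj_deriv hB hf hx).symm
      calc ((1 - s) * D A (f x) + s * D B (f x)) * D f x
          = (1 - s) * (D A (f x) * D f x) + s * (D B (f x) * D f x) := by ring
        _ = (1 - s) * (u * a) + s * (v * b) := by rw [e1, e2]
    have hX : D (M * f * M⁻¹) z = ((1 - s) * (u * a) + s * (v * b)) / dm := by
      field_simp at hkey ⊢
      linarith [hkey]
    rw [hX]
    rw [abs_lt]
    have hnum : (1 - s) * (u * a) + s * (v * b) - dm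
        = ((1 - s) * a) * (u - 1) + (s * b) * (v - 1) := by rw [hdm]; ring
    have hbound : |((1 - s) * a) * (u - 1) + (s * b) * (v - 1)| < dm * ε := by
      have w1n : (0:ℝ) ≤ (1 - s) * a := mul_nonneg (by linarith [hs.2]) hapos.le
      have w2n : (0:ℝ) ≤ s * b := mul_nonneg hs.1 hbpos.le
      calc |((1 - s) * a) * (u - 1) + (s * b) * (v - 1)|
          ≤ |((1 - s) * a) * (u - 1)| + |(s * b) * (v - 1)| := abs_add_le _ _
        _ = ((1 - s) * a) * |u - 1| + (s * b) * |v - 1| := by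
            rw [abs_mul ((1 - s) * a) (u - 1), abs_mul (s * b) (v - 1),
              abs_of_nonneg w1n, abs_of_nonneg w2n]
        _ < ((1 - s) * a + s * b) * ε := wsum_lt w1n w2n (by rw [← hdm]; exact hdmpos) hu1 hv1
        _ = dm * ε := by rw [hdm]
    rw [abs_lt] at hbound
    constructor
    · rw [div_sub' hdmpos.ne', lt_div_iff₀ hdmpos]
      nlinarith [hbound.1, hnum]
    · rw [div_sub' hdmpos.ne', div_lt_iff₀ hdmpos]
      nlinarith [hbound.2, hnum]
def Tm (t : ℝ) : ℝ := t / (1 - t)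

lemma Tm_nonneg {t : ℝ} (ht : t ∈ Ico (0:ℝ) 1) : 0 ≤ Tm t :=
  div_nonneg ht.1 (by linarith [ht.2])

lemma Tm_mono {t t' : ℝ} (ht : t ∈ Ico (0:ℝ) 1) (ht' : t' ∈ Ico (0:ℝ) 1)
    (h : t ≤ t') : Tm t ≤ Tm t' := by
  unfold Tm
  rw [div_le_div_iff₀ (by linarith [ht.2]) (by linarith [ht'.2])]
  nlinarith

lemma Tm_nat (N : ℕ) : Tm ((N:ℝ) / (N + 1)) = N := by
  unfold Tm
  have h1 : (0:ℝ) < (N:ℝ) + 1 := by positivity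
  have h2 : 1 - (N:ℝ) / (N + 1) = 1 / (N + 1) := by field_simp; ring
  rw [h2]
  field_simp

lemma Tm_dist {t t₀ : ℝ} (ht : t ∈ Ico (0:ℝ) 1) (ht0 : t₀ ∈ Ico (0:ℝ) 1)
    (hd : |t - t₀| ≤ (1 - t₀) / 2) :
    |Tm t - Tm t₀| ≤ 2 * |t - t₀| / (1 - t₀) ^ 2 := by
  have h0 : 0 < 1 - t₀ := by linarith [ht0.2]
  have h1 : 0 < 1 - t := by linarith [ht.2]
  have h2 : (1 - t₀) / 2 ≤ 1 - t := by
    have := abs_le.1 hd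
    linarith [this.1]
  have heq : Tm t - Tm t₀ = (t - t₀) / ((1 - t) * (1 - t₀)) := by
    unfold Tm; field_simp; ring
  rw [heq, abs_div, abs_of_pos (by positivity : (0:ℝ) < (1 - t) * (1 - t₀))]
  rw [div_le_div_iff₀ (by positivity) (by positivity)]
  have key : (1 - t₀) ^ 2 ≤ 2 * ((1 - t) * (1 - t₀)) := by nlinarith
  nlinarith [abs_nonneg (t - t₀), mul_le_mul_of_nonneg_left key (abs_nonneg (t - t₀))]

def Pfun (h : ℕ → Equiv.Perm ℝ) (τ x : ℝ) : ℝ :=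
  mixF (h ⌊τ⌋₊) (h (⌊τ⌋₊ + 1)) (τ - ⌊τ⌋₊) x

def PD (h : ℕ → Equiv.Perm ℝ) (τ x : ℝ) : ℝ :=
  (1 - (τ - ⌊τ⌋₊)) * D (h ⌊τ⌋₊) x + (τ - ⌊τ⌋₊) * D (h (⌊τ⌋₊ + 1)) x

lemma Pfun_rep (h : ℕ → Equiv.Perm ℝ) (n : ℕ) {τ : ℝ} (hτ : τ ∈ Icc (n:ℝ) (n+1)) (x : ℝ) :
    Pfun h τ x = (1 - (τ - n)) * h n x + (τ - n) * h (n+1) x ∧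
    PD h τ x = (1 - (τ - n)) * D (h n) x + (τ - n) * D (h (n+1)) x := by
  have h0 : (0:ℝ) ≤ τ := le_trans (by positivity) hτ.1
  rcases lt_or_eq_of_le hτ.2 with hlt | heq
  · have hfl : ⌊τ⌋₊ = n := by
      rw [Nat.floor_eq_iff (by exact_mod_cast h0)]
      exact ⟨hτ.1, by push_cast; linarith⟩
    unfold Pfun PD mixF
    rw [hfl]
    exact ⟨rfl, rfl⟩
  · have hfl : ⌊τ⌋₊ = n + 1 := by
      rw [heq, show (n:ℝ) + 1 = ((n+1 : ℕ):ℝ) by push_cast; ring, Nat.floor_natCast]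
    unfold Pfun PD mixF
    rw [hfl, heq]
    push_cast
    constructor <;> ring

lemma seg_lip (h : ℕ → Equiv.Perm ℝ) (n : ℕ) {τ τ' : ℝ} (hτ : τ ∈ Icc (n:ℝ) (n+1))
    (hτ' : τ' ∈ Icc (n:ℝ) (n+1)) {K : ℝ}
    (hK : ∀ x ∈ Icc (0:ℝ) 1, |h (n+1) x - h n x| ≤ K ∧ |D (h (n+1)) x - D (h n) x| ≤ K)
    {x : ℝ} (hx : x ∈ Icc (0:ℝ) 1) :
    |Pfun h τ x - Pfun h τ' x| ≤ K * |τ - τ'| ∧ |PD h τ x - PD h τ' x| ≤ K * |τ - τ'| := by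
  obtain ⟨r1, r2⟩ := Pfun_rep h n hτ x
  obtain ⟨r1', r2'⟩ := Pfun_rep h n hτ' x
  constructor
  · rw [r1, r1', show (1 - (τ - n)) * h n x + (τ - n) * h (n+1) x
      - ((1 - (τ' - n)) * h n x + (τ' - n) * h (n+1) x)
      = (τ - τ') * (h (n+1) x - h n x) from by ring, abs_mul, mul_comm]
    exact mul_le_mul_of_nonneg_right (hK x hx).1 (abs_nonneg _)
  · rw [r2, r2', show (1 - (τ - n)) * D (h n) x + (τ - n) * D (h (n+1)) x
      - ((1 - (τ' - n)) * D (h n) x + (τ' - n) * D (h (n+1)) x)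
      = (τ - τ') * (D (h (n+1)) x - D (h n) x) from by ring, abs_mul, mul_comm]
    exact mul_le_mul_of_nonneg_right (hK x hx).2 (abs_nonneg _)

lemma path_lip (h : ℕ → Equiv.Perm ℝ) {τ τ' : ℝ} (hτ0 : 0 ≤ τ) (hle : τ ≤ τ')
    (hd : τ' - τ < 1) {K : ℝ}
    (hK : ∀ k : ℕ, (k = ⌊τ⌋₊ ∨ k = ⌊τ⌋₊ + 1) → ∀ x ∈ Icc (0:ℝ) 1,
      |h (k+1) x - h k x| ≤ K ∧ |D (h (k+1)) x - D (h k) x| ≤ K)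
    {x : ℝ} (hx : x ∈ Icc (0:ℝ) 1) :
    |Pfun h τ x - Pfun h τ' x| ≤ K * (τ' - τ) ∧ |PD h τ x - PD h τ' x| ≤ K * (τ' - τ) := by
  set m := ⌊τ⌋₊ with hm
  have hm1 : (m:ℝ) ≤ τ := Nat.floor_le hτ0
  have hm2 : τ < (m:ℝ) + 1 := Nat.lt_floor_add_one τ
  have habs : |τ - τ'| = τ' - τ := by rw [abs_sub_comm]; exact abs_of_nonneg (by linarith)
  rcases le_or_gt τ' ((m:ℝ)+1) with hc | hc
  · have := seg_lip h m ⟨hm1, hm2.le⟩ ⟨le_trans hm1 hle, hc⟩ (hK m (Or.inl rfl)) hx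
    rw [habs] at this
    exact this
  · have hms : ((m+1:ℕ):ℝ) = (m:ℝ) + 1 := by push_cast; ring
    have hIa : τ ∈ Icc (m:ℝ) ((m:ℝ)+1) := ⟨hm1, hm2.le⟩
    have hIb : ((m:ℝ)+1) ∈ Icc (m:ℝ) ((m:ℝ)+1) := ⟨by linarith, le_refl _⟩
    have hIc : ((m:ℝ)+1) ∈ Icc ((m+1:ℕ):ℝ) ((((m+1:ℕ)):ℝ)+1) := by
      rw [hms]; exact ⟨le_refl _, by linarith⟩
    have hId : τ' ∈ Icc ((m+1:ℕ):ℝ) ((((m+1:ℕ)):ℝ)+1) := by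
      rw [hms]; exact ⟨hc.le, by linarith⟩
    have s1 := seg_lip h m hIa hIb (hK m (Or.inl rfl)) hx
    have s2 := seg_lip h (m+1) hIc hId (hK (m+1) (Or.inr rfl)) hx
    have hK0 : 0 ≤ K := le_trans (abs_nonneg _) (hK m (Or.inl rfl) x hx).1
    have e1 : |τ - ((m:ℝ)+1)| = (m:ℝ) + 1 - τ := by
      rw [abs_sub_comm]; exact abs_of_nonneg (by linarith)
    have e2 : |((m:ℝ)+1) - τ'| = τ' - ((m:ℝ)+1) := by
      rw [abs_sub_comm]; exact abs_of_nonneg (by linarith)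
    rw [e1] at s1; rw [e2] at s2
    constructor
    · calc |Pfun h τ x - Pfun h τ' x|
          ≤ |Pfun h τ x - Pfun h ((m:ℝ)+1) x| + |Pfun h ((m:ℝ)+1) x - Pfun h τ' x| :=
            abs_sub_le _ _ _
        _ ≤ K * ((m:ℝ) + 1 - τ) + K * (τ' - ((m:ℝ)+1)) := add_le_add s1.1 s2.1
        _ = K * (τ' - τ) := by ring
    · calc |PD h τ x - PD h τ' x|
          ≤ |PD h τ x - PD h ((m:ℝ)+1) x| + |PD h ((m:ℝ)+1) x - PD h τ' x| :=
            abs_sub_le _ _ _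
        _ ≤ K * ((m:ℝ) + 1 - τ) + K * (τ' - ((m:ℝ)+1)) := add_le_add s1.2 s2.2
        _ = K * (τ' - τ) := by ring

lemma sMem (τ : ℝ) (hτ : 0 ≤ τ) : τ - (⌊τ⌋₊ : ℝ) ∈ Icc (0:ℝ) 1 :=
  ⟨sub_nonneg.2 (Nat.floor_le hτ), by linarith [Nat.lt_floor_add_one τ]⟩

/-- a sequence of conjugacies bringing `G` to the identity can be
replaced by a C¹-continuous path of conjugacies. -/
theorem stmt3 (G : Subgroup (Equiv.Perm ℝ)) (hG : ∀ g ∈ G, DiffOnIcc g)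
    (h : ℕ → Equiv.Perm ℝ) (hdiff : ∀ n, DiffOnIcc (h n))
    (hconv : ∀ g ∈ G, ∀ ε > (0:ℝ), ∃ N : ℕ, ∀ n ≥ N, ∀ x ∈ Icc (0:ℝ) 1,
      |(h n * g * (h n)⁻¹) x - x| < ε ∧ |D (h n * g * (h n)⁻¹) x - 1| < ε) :
    ∃ H : ℝ → Equiv.Perm ℝ,
      (∀ t ∈ Ico (0:ℝ) 1, DiffOnIcc (H t)) ∧
      (∀ t₀ ∈ Ico (0:ℝ) 1, ∀ ε > (0:ℝ), ∃ δ > (0:ℝ), ∀ t ∈ Ico (0:ℝ) 1, |t - t₀| < δ →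
        ∀ x ∈ Icc (0:ℝ) 1, |H t x - H t₀ x| < ε ∧ |D (H t) x - D (H t₀) x| < ε) ∧
      (∀ g ∈ G, ∀ ε > (0:ℝ), ∃ t₀ ∈ Ico (0:ℝ) 1, ∀ t ∈ Ico (0:ℝ) 1, t₀ ≤ t →
        ∀ x ∈ Icc (0:ℝ) 1, |(H t * g * (H t)⁻¹) x - x| < ε ∧
          |D (H t * g * (H t)⁻¹) x - 1| < ε) := by
  classical
  -- bounds on successive differences
  have hCex : ∀ n : ℕ, ∃ C : ℝ, ∀ x ∈ Icc (0:ℝ) 1,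
      |D (h (n+1)) x - D (h n) x| ≤ C := by
    intro n
    obtain ⟨C, hC⟩ := isCompact_Icc.exists_bound_of_continuousOn
      ((hdiff (n+1)).contD.sub (hdiff n).contD)
    exact ⟨C, fun x hx => by simpa [Real.norm_eq_abs] using hC x hx⟩
  choose C hC using hCex
  set Lb : ℕ → ℝ := fun n => max (C n) 1 with hLbdef
  have hLb1 : ∀ n, (1:ℝ) ≤ Lb n := fun n => le_max_right _ _
  have hLb : ∀ n, ∀ x ∈ Icc (0:ℝ) 1,
      |h (n+1) x - h n x| ≤ Lb n ∧ |D (h (n+1)) x - D (h n) x| ≤ Lb n := by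
    intro n x hx
    constructor
    · have h1 := (hdiff (n+1)).mapsTo hx
      have h2 := (hdiff n).mapsTo hx
      have : |h (n+1) x - h n x| ≤ 1 :=
        abs_le.2 ⟨by linarith [h1.1, h2.2], by linarith [h1.2, h2.1]⟩
      exact le_trans this (hLb1 n)
    · exact le_trans (hC n x hx) (le_max_left _ _)
  set H : ℝ → Equiv.Perm ℝ := fun t =>
    if ht : t ∈ Ico (0:ℝ) 1 then
      mixPerm (h ⌊Tm t⌋₊) (h (⌊Tm t⌋₊ + 1)) (Tm t - ⌊Tm t⌋₊)
        (hdiff _) (hdiff _) (sMem (Tm t) (Tm_nonneg ht))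
    else 1 with hHdef
  have hHt : ∀ t (ht : t ∈ Ico (0:ℝ) 1),
      H t = mixPerm (h ⌊Tm t⌋₊) (h (⌊Tm t⌋₊ + 1)) (Tm t - ⌊Tm t⌋₊)
        (hdiff _) (hdiff _) (sMem (Tm t) (Tm_nonneg ht)) := by
    intro t ht
    rw [hHdef]
    exact dif_pos ht
  have hHco : ∀ t (ht : t ∈ Ico (0:ℝ) 1), ∀ x : ℝ, H t x = Pfun h (Tm t) x := by
    intro t ht x
    rw [hHt t ht]
    rfl
  have hHD : ∀ t (ht : t ∈ Ico (0:ℝ) 1), ∀ x ∈ Icc (0:ℝ) 1,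
      D (H t) x = PD h (Tm t) x := by
    intro t ht x hx
    rw [hHt t ht]
    exact D_mix _ _ _ hx
  refine ⟨H, ?_, ?_, ?_⟩
  · -- each H t is a diffeomorphism
    intro t ht
    rw [hHt t ht]
    exact mixPerm_diff _ _ _
  · -- C¹-continuity of the path
    intro t₀ ht₀ ε hε
    set τ₀ := Tm t₀ with hτ₀
    set n₀ := ⌊τ₀⌋₊ with hn₀
    set K : ℝ := max (Lb n₀) (max (Lb (n₀ + 1)) (Lb (n₀ - 1))) with hKdef
    have hK1 : (1:ℝ) ≤ K := le_trans (hLb1 n₀) (le_max_left _ _)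
    have hKpos : (0:ℝ) < K := lt_of_lt_of_le one_pos hK1
    set μ : ℝ := min (1/4) (ε / (2 * K)) with hμdef
    have hμpos : 0 < μ := lt_min (by norm_num) (by positivity)
    have ht₀1 : 0 < 1 - t₀ := by linarith [ht₀.2]
    refine ⟨min ((1 - t₀) / 2) ((1 - t₀) ^ 2 * μ / 2), lt_min (by positivity) (by positivity),
      ?_⟩
    intro t ht hdist x hx
    -- translate to τ-distance
    have hd1 : |t - t₀| ≤ (1 - t₀) / 2 :=
      le_of_lt (lt_of_lt_of_le hdist (min_le_left _ _))
    have hd2 : |t - t₀| < (1 - t₀) ^ 2 * μ / 2 :=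
      lt_of_lt_of_le hdist (min_le_right _ _)
    have hτdist : |Tm t - τ₀| < μ := by
      have h1 := Tm_dist ht ht₀ hd1
      have h2 : 2 * |t - t₀| / (1 - t₀) ^ 2 < μ := by
        rw [div_lt_iff₀ (by positivity)]
        nlinarith
      linarith
    have hτμ4 : |Tm t - τ₀| < 1/4 := lt_of_lt_of_le hτdist (min_le_left _ _)
    have hτμε : |Tm t - τ₀| < ε / (2 * K) := lt_of_lt_of_le hτdist (min_le_right _ _)
    -- a two-sided Lipschitz claim
    have claim : ∀ σ σ' : ℝ, 0 ≤ σ → σ ≤ σ' → σ ≤ τ₀ → τ₀ < σ + 1 → σ' - σ < 1 →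
        |Pfun h σ x - Pfun h σ' x| ≤ K * (σ' - σ) ∧
        |PD h σ x - PD h σ' x| ≤ K * (σ' - σ) := by
      intro σ σ' hσ0 hσle hστ₀ hτ₀σ hσd
      apply path_lip h hσ0 hσle hσd (K := K) ?_ hx
      intro k hk
      have hfle : ⌊σ⌋₊ ≤ n₀ := Nat.floor_le_floor hστ₀
      have hfge : n₀ ≤ ⌊σ⌋₊ + 1 := by
        have h1 : (⌊σ⌋₊ : ℝ) ≤ σ := Nat.floor_le hσ0
        have h2 : (n₀ : ℝ) ≤ τ₀ := Nat.floor_le (le_trans hσ0 hστ₀)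
        have h0 : σ < (⌊σ⌋₊ : ℝ) + 1 := Nat.lt_floor_add_one σ
        have h3 : (n₀ : ℝ) < (⌊σ⌋₊ : ℝ) + 2 := by linarith
        have h4 : n₀ < ⌊σ⌋₊ + 2 := by exact_mod_cast h3
        omega
      have hcase : ⌊σ⌋₊ = n₀ ∨ ⌊σ⌋₊ + 1 = n₀ := by omega
      intro y hy
      have base := hLb k y hy
      have hLbK : Lb k ≤ K := by
        rcases hk with rfl | rfl
        · rcases hcase with hc | hc
          · rw [hc]; exact le_max_left _ _
          · rw [show ⌊σ⌋₊ = n₀ - 1 by omega]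
            exact le_trans (le_max_right _ _) (le_max_right _ _)
        · rcases hcase with hc | hc
          · rw [hc]
            exact le_trans (le_max_left _ _) (le_max_right _ _)
          · rw [hc]; exact le_max_left _ _
      exact ⟨le_trans base.1 hLbK, le_trans base.2 hLbK⟩
    have main : |Pfun h (Tm t) x - Pfun h τ₀ x| < ε ∧ |PD h (Tm t) x - PD h τ₀ x| < ε := by
      have habs := abs_lt.1 hτμ4
      rcases le_total (Tm t) τ₀ with hc | hc
      · obtain ⟨c1, c2⟩ := claim (Tm t) τ₀ (Tm_nonneg ht) hc hc (by linarith) (by linarith)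
        have hτKε : K * (τ₀ - Tm t) < ε := by
          have : τ₀ - Tm t < ε / (2 * K) := by
            rw [abs_sub_comm] at hτμε
            have := (abs_lt.1 hτμε).2
            linarith
          calc K * (τ₀ - Tm t) < K * (ε / (2 * K)) := (mul_lt_mul_iff_right₀ hKpos).2 this
            _ = ε / 2 := by field_simp
            _ < ε := by linarith
        exact ⟨lt_of_le_of_lt c1 hτKε, lt_of_le_of_lt c2 hτKε⟩
      · obtain ⟨c1, c2⟩ := claim τ₀ (Tm t) (Tm_nonneg ht₀) hc (le_refl _) (by linarith)
          (by linarith)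
        rw [abs_sub_comm (Pfun h τ₀ x)] at c1
        rw [abs_sub_comm (PD h τ₀ x)] at c2
        have hτKε : K * (Tm t - τ₀) < ε := by
          have := (abs_lt.1 hτμε).2
          calc K * (Tm t - τ₀) < K * (ε / (2 * K)) := (mul_lt_mul_iff_right₀ hKpos).2 (by linarith)
            _ = ε / 2 := by field_simp
            _ < ε := by linarith
        exact ⟨lt_of_le_of_lt c1 hτKε, lt_of_le_of_lt c2 hτKε⟩
    rw [hHco t ht x, hHco t₀ ht₀ x, hHD t ht x hx, hHD t₀ ht₀ x hx]
    exact main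
  · -- convergence of the conjugates along the path
    intro g hg ε hε
    obtain ⟨N, hN⟩ := hconv g hg ε hε
    have hNpos : (0:ℝ) < (N:ℝ) + 1 := by positivity
    refine ⟨(N:ℝ) / ((N:ℝ) + 1), ⟨by positivity, by rw [div_lt_one hNpos]; linarith⟩, ?_⟩
    intro t ht hle x hx
    have hτN : (N:ℝ) ≤ Tm t := by
      have := Tm_mono ⟨by positivity, by rw [div_lt_one hNpos]; linarith⟩ ht hle
      rwa [Tm_nat N] at this
    have hnN : N ≤ ⌊Tm t⌋₊ := Nat.le_floor hτN
    rw [hHt t ht]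
    exact mix_conj_bound (hdiff _) (hdiff _) (hG g hg) (sMem (Tm t) (Tm_nonneg ht))
      (fun z hz => hN _ hnN z hz) (fun z hz => hN _ (le_trans hnN (Nat.le_succ _)) z hz) x hx
end
end

section
/- Let (G_n) be an increasing sequence of subgroups of Diff^1_+([0,1]), each finitely generated and C^1-close to the identity. Then the union G = ⋃_n G_n is C^1-close to the identity. -/
open Set Filter

noncomputable section

/-- `G` is C¹-close to the identity: some sequence of conjugacies brings every
element of `G` to the identity in the C¹ topology. -/
def C1CloseId (G : Subgroup (Equiv.Perm ℝ)) : Prop :=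
  ∃ h : ℕ → Equiv.Perm ℝ, (∀ n, DiffOnIcc (h n)) ∧
    ∀ g ∈ G, ∀ ε > (0:ℝ), ∃ N : ℕ, ∀ n ≥ N, ∀ x ∈ Icc (0:ℝ) 1,
      |(h n * g * (h n)⁻¹) x - x| < ε ∧ |D (h n * g * (h n)⁻¹) x - 1| < ε


lemma fg_countable {α : Type*} [Group α] (H : Subgroup α) (h : H.FG) :
    (H : Set α).Countable := by
  obtain ⟨S, hS⟩ := h
  have hfin : ((S : Set α) ∪ (S : Set α)⁻¹).Finite :=
    S.finite_toSet.union S.finite_toSet.inv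
  have := hfin.countable.to_subtype
  apply Set.Countable.mono ?_
    (Set.countable_range fun l : List ((S : Set α) ∪ (S : Set α)⁻¹ : Set α) =>
      (l.map Subtype.val).prod)
  intro x hx
  have hx' : x ∈ Submonoid.closure ((S : Set α) ∪ (S : Set α)⁻¹) := by
    rw [← Subgroup.closure_toSubmonoid, hS]
    exact hx
  obtain ⟨l, hl, hprod⟩ := Submonoid.exists_list_of_mem_closure hx'
  refine ⟨l.pmap (fun y hy => ⟨y, hy⟩) hl, ?_⟩
  simp only [List.map_pmap]
  rw [show (List.pmap (fun (a : α) (_ : a ∈ (S : Set α) ∪ (S : Set α)⁻¹) => a) l hl)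
      = l.map id from List.pmap_eq_map (f := id) hl, List.map_id]
  exact hprod

/-- an increasing union of finitely generated groups C¹-close to the
identity is C¹-close to the identity. -/
theorem stmt4 (G : ℕ → Subgroup (Equiv.Perm ℝ))
    (hdiff : ∀ n, ∀ g ∈ G n, DiffOnIcc g)
    (hmono : ∀ n, G n ≤ G (n+1))
    (hfg : ∀ n, (G n).FG)
    (hclose : ∀ n, C1CloseId (G n)) :
    C1CloseId (⨆ n, G n) := by
  have hmonoG : Monotone G := monotone_nat_of_le_succ hmono
  have hdir : Directed (· ≤ ·) G := hmonoG.directed_le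
  have hmem : ∀ g, g ∈ (⨆ n, G n) ↔ ∃ n, g ∈ G n := fun g =>
    Subgroup.mem_iSup_of_directed hdir
  have hcount : ((⨆ n, G n : Subgroup (Equiv.Perm ℝ)) : Set (Equiv.Perm ℝ)).Countable := by
    have hsub : ((⨆ n, G n : Subgroup (Equiv.Perm ℝ)) : Set (Equiv.Perm ℝ)) ⊆
        ⋃ n, (G n : Set (Equiv.Perm ℝ)) := by
      intro g hg
      obtain ⟨n, hn⟩ := (hmem g).mp hg
      exact Set.mem_iUnion.mpr ⟨n, hn⟩
    exact (Set.countable_iUnion fun n => fg_countable _ (hfg n)).mono hsub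
  have hne : ((⨆ n, G n : Subgroup (Equiv.Perm ℝ)) : Set (Equiv.Perm ℝ)).Nonempty :=
    ⟨1, (⨆ n, G n).one_mem⟩
  obtain ⟨e, he⟩ := hcount.exists_eq_range hne
  choose idx hidx using fun k => (hmem (e k)).mp
    (show e k ∈ ⨆ n, G n from by
      rw [← SetLike.mem_coe, he]; exact Set.mem_range_self k)
  have step : ∀ m : ℕ, ∃ f : Equiv.Perm ℝ, DiffOnIcc f ∧ ∀ k ≤ m, ∀ x ∈ Icc (0:ℝ) 1,
      |(f * e k * f⁻¹) x - x| < 1/(m+1) ∧ |D (f * e k * f⁻¹) x - 1| < 1/(m+1) := by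
    intro m
    set M := (Finset.range (m+1)).sup idx with hM
    obtain ⟨h', hd', hp'⟩ := hclose M
    have hεpos : (0:ℝ) < 1/(m+1) := by positivity
    have hkmem : ∀ k ≤ m, e k ∈ G M := fun k hk =>
      hmonoG (Finset.le_sup (Finset.mem_range.mpr (Nat.lt_succ_of_le hk))) (hidx k)
    have hN : ∀ k : ℕ, ∃ N : ℕ, k ≤ m → ∀ n ≥ N, ∀ x ∈ Icc (0:ℝ) 1,
        |(h' n * e k * (h' n)⁻¹) x - x| < 1/(m+1) ∧
        |D (h' n * e k * (h' n)⁻¹) x - 1| < 1/(m+1) := by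
      intro k
      by_cases hk : k ≤ m
      · obtain ⟨N, hN⟩ := hp' (e k) (hkmem k hk) (1/(m+1)) hεpos
        exact ⟨N, fun _ => hN⟩
      · exact ⟨0, fun h => absurd h hk⟩
    choose N hNspec using hN
    refine ⟨h' ((Finset.range (m+1)).sup N), hd' _, fun k hk x hx => ?_⟩
    exact hNspec k hk _ (Finset.le_sup (Finset.mem_range.mpr (Nat.lt_succ_of_le hk))) x hx
  choose H hHdiff hHspec using step
  refine ⟨H, hHdiff, ?_⟩
  intro g hg ε hε
  obtain ⟨k, hk⟩ := show g ∈ Set.range e from by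
    rw [← he]; exact hg
  obtain ⟨N0, hN0⟩ := exists_nat_one_div_lt hε
  refine ⟨max k N0, fun n hn x hx => ?_⟩
  have hkn : k ≤ n := le_trans (le_max_left _ _) hn
  have h1 : (1:ℝ)/(n+1) ≤ 1/(N0+1) := by
    apply one_div_le_one_div_of_le
    · positivity
    · have : (N0:ℝ) ≤ n := by
        exact_mod_cast le_trans (le_max_right _ _) hn
      linarith
  obtain ⟨hA, hB⟩ := hHspec n k hkn x hx
  rw [← hk]
  exact ⟨hA.trans_le (h1.trans hN0.le), hB.trans_le (h1.trans hN0.le)⟩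
end
end

section
/- A group G ⊂ Homeo_+([0,1]) is without crossing if and only if it is without linked fixed points. -/
open Set Filter

noncomputable section

/-- Two pairs of successive fixed points are linked if one of the open intervals
contains exactly one endpoint of the other pair. -/
def LinkedPairs (a b c d : ℝ) : Prop :=
  (∃! x, x ∈ ({c, d} : Set ℝ) ∩ Ioo a b) ∨ (∃! x, x ∈ ({a, b} : Set ℝ) ∩ Ioo c d)

namespace Stmt5Aux

variable {f g : Equiv.Perm ℝ} {a b c d : ℝ}

/-- The inverse also maps `[0,1]` to itself. -/
lemma symm_mapsTo (hf : HomeoOnIcc f) : MapsTo ⇑f.symm (Icc (0:ℝ) 1) (Icc (0:ℝ) 1) := by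
  intro y hy
  by_contra h
  have h1 : f (f.symm y) = f.symm y := hf.1 _ h
  rw [Equiv.apply_symm_apply] at h1
  rw [← h1] at h
  exact h hy

lemma lt_of_apply_lt (hf : HomeoOnIcc f) {x y : ℝ} (hx : x ∈ Icc (0:ℝ) 1)
    (hy : y ∈ Icc (0:ℝ) 1) (h : f x < f y) : x < y :=
  (hf.2.2.1.lt_iff_lt hx hy).mp h

lemma mem_Icc_of_mem_Ioo (ha : a ∈ Icc (0:ℝ) 1) (hb : b ∈ Icc (0:ℝ) 1) {x : ℝ}
    (hx : x ∈ Ioo a b) : x ∈ Icc (0:ℝ) 1 :=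
  ⟨ha.1.trans hx.1.le, hx.2.le.trans hb.2⟩

/-- An interval with fixed endpoints is preserved. -/
lemma maps_Ioo (hf : HomeoOnIcc f) (ha : a ∈ Icc (0:ℝ) 1) (hb : b ∈ Icc (0:ℝ) 1)
    (hfa : f a = a) (hfb : f b = b) {x : ℝ} (hx : x ∈ Ioo a b) : f x ∈ Ioo a b := by
  have hxI : x ∈ Icc (0:ℝ) 1 := mem_Icc_of_mem_Ioo ha hb hx
  constructor
  · calc a = f a := hfa.symm
      _ < f x := hf.2.2.1 ha hxI hx.1
  · calc f x < f b := hf.2.2.1 hxI hb hx.2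
      _ = b := hfb

lemma compFix_inv (h : IsCompFix f a b) : IsCompFix f⁻¹ a b := by
  obtain ⟨ha, hb, hab, hfa, hfb, hno⟩ := h
  refine ⟨ha, hb, hab, ?_, ?_, ?_⟩
  · show f.symm a = a
    rw [Equiv.symm_apply_eq]; exact hfa.symm
  · show f.symm b = b
    rw [Equiv.symm_apply_eq]; exact hfb.symm
  · intro x hx hcon
    apply hno x hx
    have hcon' : f.symm x = x := hcon
    have : f (f.symm x) = f x := congrArg f hcon'
    rw [Equiv.apply_symm_apply] at this
    exact this.symm

/-- Endpoints `0` and `1` are fixed. -/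
lemma fix_zero (hf : HomeoOnIcc f) : f 0 = 0 := by
  have h0 : (0:ℝ) ∈ Icc (0:ℝ) 1 := by norm_num
  have hf0 : f 0 ∈ Icc (0:ℝ) 1 := hf.2.1 h0
  have hx : f.symm 0 ∈ Icc (0:ℝ) 1 := symm_mapsTo hf h0
  rcases lt_trichotomy (f.symm 0) 0 with h | h | h
  · exact absurd h (not_lt.mpr hx.1)
  · rw [← h, Equiv.apply_symm_apply]; exact h.symm
  · exfalso
    have := hf.2.2.1 h0 hx h
    rw [Equiv.apply_symm_apply] at this
    exact absurd (this.trans_le hf0.1) (lt_irrefl _)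

lemma fix_one (hf : HomeoOnIcc f) : f 1 = 1 := by
  have h1 : (1:ℝ) ∈ Icc (0:ℝ) 1 := by norm_num
  have hf1 : f 1 ∈ Icc (0:ℝ) 1 := hf.2.1 h1
  have hx : f.symm 1 ∈ Icc (0:ℝ) 1 := symm_mapsTo hf h1
  rcases lt_trichotomy (f.symm 1) 1 with h | h | h
  · exfalso
    have := hf.2.2.1 hx h1 h
    rw [Equiv.apply_symm_apply] at this
    exact absurd (hf1.2.trans_lt this) (lt_irrefl _)
  · rw [← h, Equiv.apply_symm_apply]; exact h.symm
  · exact absurd h (not_lt.mpr hx.2)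

/-- Sign of `g x - x` is constant on a component. -/
lemma sign_pos (hg : HomeoOnIcc g) (hcd : IsCompFix g c d) {x y : ℝ}
    (hx : x ∈ Ioo c d) (hy : y ∈ Ioo c d) (h : x < g x) : y < g y := by
  by_contra hcon
  push_neg at hcon
  have hne : g y ≠ y := hcd.2.2.2.2.2 y hy
  have hylt : g y < y := lt_of_le_of_ne hcon hne
  set F : ℝ → ℝ := fun t => g t - t with hF
  have hsub : uIcc x y ⊆ Ioo c d := Set.ordConnected_Ioo.uIcc_subset hx hy
  have hsub2 : uIcc x y ⊆ Icc (0:ℝ) 1 := fun t ht =>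
    mem_Icc_of_mem_Ioo hcd.1 hcd.2.1 (hsub ht)
  have hcont : ContinuousOn F (uIcc x y) :=
    (hg.2.2.2.sub continuousOn_id).mono hsub2
  have h0 : (0:ℝ) ∈ uIcc (F x) (F y) := by
    rw [Set.mem_uIcc]
    right
    constructor
    · simp only [hF]; linarith
    · simp only [hF]; linarith
  obtain ⟨z, hz, hFz⟩ := intermediate_value_uIcc hcont h0
  have : g z = z := by simpa [hF, sub_eq_zero] using hFz
  exact hcd.2.2.2.2.2 z (hsub hz) this

lemma sign_neg (hg : HomeoOnIcc g) (hcd : IsCompFix g c d) {x y : ℝ}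
    (hx : x ∈ Ioo c d) (hy : y ∈ Ioo c d) (h : g x < x) : g y < y := by
  by_contra hcon
  push_neg at hcon
  have hne : g y ≠ y := hcd.2.2.2.2.2 y hy
  have : y < g y := lt_of_le_of_ne hcon (Ne.symm hne)
  have := sign_pos hg hcd hy hx this
  linarith

/-- Conjugation moves components. -/
lemma compFix_conj (hg : HomeoOnIcc g) (hab : IsCompFix f a b) :
    IsCompFix (g * f * g⁻¹) (g a) (g b) := by
  obtain ⟨ha, hb, haltb, hfa, hfb, hno⟩ := hab
  have happ : ∀ x : ℝ, (g * f * g⁻¹) x = g (f (g.symm x)) := fun x => rfl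
  refine ⟨hg.2.1 ha, hg.2.1 hb, hg.2.2.1 ha hb haltb, ?_, ?_, ?_⟩
  · rw [happ, Equiv.symm_apply_apply, hfa]
  · rw [happ, Equiv.symm_apply_apply, hfb]
  · intro y hy hcon
    have hyI : y ∈ Icc (0:ℝ) 1 := mem_Icc_of_mem_Ioo (hg.2.1 ha) (hg.2.1 hb) hy
    set x := g.symm y with hxdef
    have hxI : x ∈ Icc (0:ℝ) 1 := symm_mapsTo hg hyI
    have hgx : g x = y := Equiv.apply_symm_apply g y
    have hax : a < x := lt_of_apply_lt hg ha hxI (by rw [hgx]; exact hy.1)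
    have hxb : x < b := lt_of_apply_lt hg hxI hb (by rw [hgx]; exact hy.2)
    rw [happ] at hcon
    have : g (f x) = g x := by rw [hgx]; exact hcon
    exact hno x ⟨hax, hxb⟩ (g.injective this)

/-- Construction of the component of `Fix g` containing a non-fixed point `a`. -/
lemma exists_component (hg : HomeoOnIcc g) (ha : a ∈ Icc (0:ℝ) 1) (hga : g a ≠ a) :
    ∃ c d : ℝ, IsCompFix g c d ∧ c < a ∧ a < d := by
  set S : Set ℝ := Icc (0:ℝ) 1 ∩ (fun x => g x - x) ⁻¹' {0} with hS
  have hmemS : ∀ x, x ∈ S ↔ x ∈ Icc (0:ℝ) 1 ∧ g x = x := by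
    intro x
    simp [hS, sub_eq_zero]
  have hSclosed : IsClosed S :=
    (hg.2.2.2.sub continuousOn_id).preimage_isClosed_of_isClosed isClosed_Icc isClosed_singleton
  have h0S : (0:ℝ) ∈ S := (hmemS 0).mpr ⟨by norm_num, fix_zero hg⟩
  have h1S : (1:ℝ) ∈ S := (hmemS 1).mpr ⟨by norm_num, fix_one hg⟩
  set c := sSup (S ∩ Iic a) with hc
  set d := sInf (S ∩ Ici a) with hd
  have hne1 : (S ∩ Iic a).Nonempty := ⟨0, h0S, ha.1⟩
  have hne2 : (S ∩ Ici a).Nonempty := ⟨1, h1S, ha.2⟩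
  have hbdd1 : BddAbove (S ∩ Iic a) := ⟨a, fun x hx => hx.2⟩
  have hbdd2 : BddBelow (S ∩ Ici a) := ⟨a, fun x hx => hx.2⟩
  have hcmem : c ∈ S ∩ Iic a :=
    (hSclosed.inter isClosed_Iic).csSup_mem hne1 hbdd1
  have hdmem : d ∈ S ∩ Ici a :=
    (hSclosed.inter isClosed_Ici).csInf_mem hne2 hbdd2
  have hcS := (hmemS c).mp hcmem.1
  have hdS := (hmemS d).mp hdmem.1
  have hca : c < a := lt_of_le_of_ne hcmem.2 (fun h => hga (h ▸ hcS.2))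
  have had : a < d := hdmem.2.lt_of_ne (by intro h; apply hga; rw [h]; exact hdS.2)
  refine ⟨c, d, ⟨hcS.1, hdS.1, hca.trans had, hcS.2, hdS.2, ?_⟩, hca, had⟩
  intro x hx hgx
  have hxI : x ∈ Icc (0:ℝ) 1 := mem_Icc_of_mem_Ioo hcS.1 hdS.1 hx
  have hxS : x ∈ S := (hmemS x).mpr ⟨hxI, hgx⟩
  rcases le_or_gt x a with h | h
  · exact absurd (le_csSup hbdd1 ⟨hxS, h⟩) (not_le.mpr hx.1)
  · exact absurd (csInf_le hbdd2 ⟨hxS, h.le⟩) (not_le.mpr hx.2)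

/-- Key lemma: under the no-crossing hypothesis, the left endpoint of a
component of `g` cannot lie strictly inside a component of `f` whose right
endpoint is `≤ d`. -/
lemma keyL (G : Subgroup (Equiv.Perm ℝ)) (hG : ∀ g ∈ G, HomeoOnIcc g)
    (H : ∀ f ∈ G, ∀ g ∈ G, ∀ a b : ℝ, IsCompFix f a b →
      g a ∉ Ioo a b ∧ g b ∉ Ioo a b)
    {f g : Equiv.Perm ℝ} {a b c d : ℝ} (hf : f ∈ G) (hg : g ∈ G)
    (hab : IsCompFix f a b) (hcd : IsCompFix g c d)
    (hc : c ∈ Ioo a b) (hbd : b ≤ d) : False := by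
  have Hf := hG f hf
  have hfc : f c ∈ Ioo a b := maps_Ioo Hf hab.1 hab.2.1 hab.2.2.2.1 hab.2.2.2.2.1 hc
  rcases lt_or_gt_of_ne (hab.2.2.2.2.2 c hc) with hlt | hgt
  · have hf' : f⁻¹ ∈ G := inv_mem hf
    have Hf' := hG f⁻¹ hf'
    have hab' := compFix_inv hab
    have hfc' : f⁻¹ c ∈ Ioo a b :=
      maps_Ioo Hf' hab'.1 hab'.2.1 hab'.2.2.2.1 hab'.2.2.2.2.1 hc
    have hcI : c ∈ Icc (0:ℝ) 1 := mem_Icc_of_mem_Ioo hab.1 hab.2.1 hc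
    have hC : c < f⁻¹ c := by
      have h2 : f c < f (f⁻¹ c) := by rw [show f (f⁻¹ c) = c from Equiv.apply_symm_apply f c]; exact hlt
      exact lt_of_apply_lt Hf hcI (mem_Icc_of_mem_Ioo hab.1 hab.2.1 hfc') h2
    exact (H g hg f⁻¹ hf' c d hcd).1 ⟨hC, hfc'.2.trans_le hbd⟩
  · exact (H g hg f hf c d hcd).1 ⟨hgt, hfc.2.trans_le hbd⟩

/-- Mirror key lemma. -/
lemma keyR (G : Subgroup (Equiv.Perm ℝ)) (hG : ∀ g ∈ G, HomeoOnIcc g)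
    (H : ∀ f ∈ G, ∀ g ∈ G, ∀ a b : ℝ, IsCompFix f a b →
      g a ∉ Ioo a b ∧ g b ∉ Ioo a b)
    {f g : Equiv.Perm ℝ} {a b c d : ℝ} (hf : f ∈ G) (hg : g ∈ G)
    (hab : IsCompFix f a b) (hcd : IsCompFix g c d)
    (hd : d ∈ Ioo a b) (hca : c ≤ a) : False := by
  have Hf := hG f hf
  have hfd : f d ∈ Ioo a b := maps_Ioo Hf hab.1 hab.2.1 hab.2.2.2.1 hab.2.2.2.2.1 hd
  rcases lt_or_gt_of_ne (hab.2.2.2.2.2 d hd) with hlt | hgt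
  · exact (H g hg f hf c d hcd).2 ⟨hca.trans_lt hfd.1, hlt⟩
  · have hf' : f⁻¹ ∈ G := inv_mem hf
    have Hf' := hG f⁻¹ hf'
    have hab' := compFix_inv hab
    have hfd' : f⁻¹ d ∈ Ioo a b :=
      maps_Ioo Hf' hab'.1 hab'.2.1 hab'.2.2.2.1 hab'.2.2.2.2.1 hd
    have hdI : d ∈ Icc (0:ℝ) 1 := mem_Icc_of_mem_Ioo hab.1 hab.2.1 hd
    have hD : f⁻¹ d < d := by
      have h2 : f (f⁻¹ d) < f d := by rw [show f (f⁻¹ d) = d from Equiv.apply_symm_apply f d]; exact hgt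
      exact lt_of_apply_lt Hf (mem_Icc_of_mem_Ioo hab.1 hab.2.1 hfd') hdI h2
    exact (H g hg f⁻¹ hf' c d hcd).2 ⟨hca.trans_lt hfd'.1, hD⟩

end Stmt5Aux

open Stmt5Aux in
/-- a group of orientation-preserving homeomorphisms of `[0,1]` is
without crossing iff it is without linked fixed points. -/
theorem stmt5 (G : Subgroup (Equiv.Perm ℝ)) (hG : ∀ g ∈ G, HomeoOnIcc g) :
    (∀ f ∈ G, ∀ g ∈ G, ∀ a b : ℝ, IsCompFix f a b →
        g a ∉ Ioo a b ∧ g b ∉ Ioo a b)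
      ↔
    (∀ a b c d : ℝ, SuccFix G a b → SuccFix G c d → ¬ LinkedPairs a b c d) := by
  constructor
  · -- no crossing → no linked pairs
    intro H a b c d hsf1 hsf2 hlink
    obtain ⟨f, hf, hab⟩ := hsf1
    obtain ⟨g, hg, hcd⟩ := hsf2
    rcases hlink with ⟨x, ⟨hxmem, hxIoo⟩, huniq⟩ | ⟨x, ⟨hxmem, hxIoo⟩, huniq⟩
    · rcases hxmem with rfl | hxmem
      · -- x = c ∈ Ioo a b
        have hdni : d ∉ Ioo a b := by
          intro hdm
          have := huniq d ⟨Or.inr rfl, hdm⟩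
          exact absurd (this ▸ hcd.2.2.1) (lt_irrefl _)
        have hbd : b ≤ d := by
          by_contra hcon
          push_neg at hcon
          exact hdni ⟨hxIoo.1.trans hcd.2.2.1, hcon⟩
        exact keyL G hG H hf hg hab hcd hxIoo hbd
      · -- x = d ∈ Ioo a b
        rw [Set.mem_singleton_iff] at hxmem
        subst hxmem
        have hcni : c ∉ Ioo a b := by
          intro hcm
          have := huniq c ⟨Or.inl rfl, hcm⟩
          exact absurd (this ▸ hcd.2.2.1) (lt_irrefl _)
        have hca : c ≤ a := by
          by_contra hcon
          push_neg at hcon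
          exact hcni ⟨hcon, hcd.2.2.1.trans hxIoo.2⟩
        exact keyR G hG H hf hg hab hcd hxIoo hca
    · rcases hxmem with rfl | hxmem
      · -- x = a ∈ Ioo c d
        have hbni : b ∉ Ioo c d := by
          intro hbm
          have := huniq b ⟨Or.inr rfl, hbm⟩
          exact absurd (this ▸ hab.2.2.1) (lt_irrefl _)
        have hdb : d ≤ b := by
          by_contra hcon
          push_neg at hcon
          exact hbni ⟨hxIoo.1.trans hab.2.2.1, hcon⟩
        exact keyL G hG H hg hf hcd hab hxIoo hdb
      · -- x = b ∈ Ioo c d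
        rw [Set.mem_singleton_iff] at hxmem
        subst hxmem
        have hani : a ∉ Ioo c d := by
          intro ham
          have := huniq a ⟨Or.inl rfl, ham⟩
          exact absurd (this ▸ hab.2.2.1) (lt_irrefl _)
        have hac : a ≤ c := by
          by_contra hcon
          push_neg at hcon
          exact hani ⟨hcon, hab.2.2.1.trans hxIoo.2⟩
        exact keyR G hG H hg hf hcd hab hxIoo hac
  · -- no linked pairs → no crossing
    intro NL f hf g hg a b hab
    have Hg := hG g hg
    have hs1 : SuccFix G a b := ⟨f, hf, hab⟩
    constructor
    · intro hmem
      have hga : g a ≠ a := ne_of_gt hmem.1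
      obtain ⟨c, d, hcd, hca, had⟩ := exists_component Hg hab.1 hga
      have hs2 : SuccFix G c d := ⟨g, hg, hcd⟩
      rcases lt_trichotomy d b with h | h | h
      · refine NL a b c d hs1 hs2 (Or.inl ⟨d, ⟨Or.inr rfl, ⟨had, h⟩⟩, ?_⟩)
        rintro y ⟨hy1, hy2⟩
        rcases hy1 with rfl | hy1
        · exact absurd (hca.trans hy2.1) (lt_irrefl _)
        · exact hy1
      · refine NL a b c d hs1 hs2 (Or.inr ⟨a, ⟨Or.inl rfl, ⟨hca, had⟩⟩, ?_⟩)
        rintro y ⟨hy1, hy2⟩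
        rcases hy1 with rfl | hy1
        · rfl
        · rw [Set.mem_singleton_iff] at hy1
          subst hy1
          exact absurd (h ▸ hy2.2) (lt_irrefl _)
      · have haIoo : a ∈ Ioo c d := ⟨hca, had⟩
        have hbIoo : b ∈ Ioo c d := ⟨hca.trans hab.2.2.1, h⟩
        have hgb : b < g b := sign_pos Hg hcd haIoo hbIoo hmem.1
        have hconj := compFix_conj Hg hab
        have hmemh : g * f * g⁻¹ ∈ G := mul_mem (mul_mem hg hf) (inv_mem hg)
        refine NL a b (g a) (g b) hs1 ⟨_, hmemh, hconj⟩
          (Or.inl ⟨g a, ⟨Or.inl rfl, hmem⟩, ?_⟩)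
        rintro y ⟨hy1, hy2⟩
        rcases hy1 with rfl | hy1
        · rfl
        · rw [Set.mem_singleton_iff] at hy1
          subst hy1
          exact absurd (hgb.trans hy2.2) (lt_irrefl _)
    · intro hmem
      have hgbne : g b ≠ b := ne_of_lt hmem.2
      obtain ⟨c, d, hcd, hcb, hbd⟩ := exists_component Hg hab.2.1 hgbne
      have hs2 : SuccFix G c d := ⟨g, hg, hcd⟩
      rcases lt_trichotomy a c with h | h | h
      · refine NL a b c d hs1 hs2 (Or.inl ⟨c, ⟨Or.inl rfl, ⟨h, hcb⟩⟩, ?_⟩)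
        rintro y ⟨hy1, hy2⟩
        rcases hy1 with rfl | hy1
        · rfl
        · rw [Set.mem_singleton_iff] at hy1
          subst hy1
          exact absurd (hbd.trans hy2.2) (lt_irrefl _)
      · refine NL a b c d hs1 hs2 (Or.inr ⟨b, ⟨Or.inr rfl, ⟨hcb, hbd⟩⟩, ?_⟩)
        rintro y ⟨hy1, hy2⟩
        rcases hy1 with rfl | hy1
        · exact absurd (h ▸ hy2.1) (lt_irrefl _)
        · exact hy1
      · have hbIoo : b ∈ Ioo c d := ⟨hcb, hbd⟩
        have haIoo : a ∈ Ioo c d := ⟨h, hab.2.2.1.trans hbd⟩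
        have hga : g a < a := sign_neg Hg hcd hbIoo haIoo hmem.2
        have hconj := compFix_conj Hg hab
        have hmemh : g * f * g⁻¹ ∈ G := mul_mem (mul_mem hg hf) (inv_mem hg)
        refine NL a b (g a) (g b) hs1 ⟨_, hmemh, hconj⟩
          (Or.inl ⟨g b, ⟨Or.inr rfl, hmem⟩, ?_⟩)
        rintro y ⟨hy1, hy2⟩
        rcases hy1 with rfl | hy1
        · exact absurd (hga.trans hy2.1) (lt_irrefl _)
        · exact hy1
end
end

section
/- Let G ⊂ Homeo_+([0,1]) be a group without crossing. Then the collection of pairs of successive fixed points of elements of G is at most countable. -/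
open Set Filter

noncomputable section

/- ### Auxiliary lemmas -/

lemma mem_Icc_of_mem_Ioo {a b x : ℝ} (ha : a ∈ Icc (0:ℝ) 1) (hb : b ∈ Icc (0:ℝ) 1)
    (hx : x ∈ Ioo a b) : x ∈ Icc (0:ℝ) 1 :=
  ⟨ha.1.trans hx.1.le, hx.2.le.trans hb.2⟩

lemma fix_inv {g : Equiv.Perm ℝ} {a : ℝ} (h : g a = a) : g⁻¹ a = a := by
  rw [Equiv.Perm.inv_def, Equiv.symm_apply_eq, h]

lemma IsCompFix.inv {g : Equiv.Perm ℝ} {a b : ℝ} (h : IsCompFix g a b) :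
    IsCompFix g⁻¹ a b := by
  obtain ⟨ha, hb, hab, hfa, hfb, hmov⟩ := h
  refine ⟨ha, hb, hab, fix_inv hfa, fix_inv hfb, ?_⟩
  intro x hx hfx
  have h2 := congrArg g hfx
  rw [show g (g⁻¹ x) = x from g.apply_symm_apply x] at h2
  exact hmov x hx h2.symm

lemma inv_mem_Ioo {g : Equiv.Perm ℝ} (hH : HomeoOnIcc g) {a b x : ℝ}
    (haI : a ∈ Icc (0:ℝ) 1) (hbI : b ∈ Icc (0:ℝ) 1)
    (hfa : g a = a) (hfb : g b = b) (hx : x ∈ Ioo a b) : g⁻¹ x ∈ Ioo a b := by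
  obtain ⟨hid, hmaps, hmono, hcont⟩ := hH
  have hgy : g (g⁻¹ x) = x := g.apply_symm_apply x
  have hxI : x ∈ Icc (0:ℝ) 1 := mem_Icc_of_mem_Ioo haI hbI hx
  have hyI : g⁻¹ x ∈ Icc (0:ℝ) 1 := by
    by_contra hyI
    have h2 : g (g⁻¹ x) = g⁻¹ x := hid _ hyI
    rw [hgy] at h2
    exact hyI (h2 ▸ hxI)
  constructor
  · by_contra hle
    push_neg at hle
    have h2 : g (g⁻¹ x) ≤ g a := hmono.monotoneOn hyI haI hle
    rw [hgy, hfa] at h2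
    exact absurd h2 (not_le.mpr hx.1)
  · by_contra hle
    push_neg at hle
    have h2 : g b ≤ g (g⁻¹ x) := hmono.monotoneOn hbI hyI hle
    rw [hgy, hfb] at h2
    exact absurd h2 (not_le.mpr hx.2)

lemma sign_dichotomy {g : Equiv.Perm ℝ} (hH : HomeoOnIcc g) {a b : ℝ}
    (hc : IsCompFix g a b) :
    (∀ x ∈ Ioo a b, g x < x) ∨ (∀ x ∈ Ioo a b, x < g x) := by
  by_contra hcon
  push_neg at hcon
  obtain ⟨⟨x0, hx0, hx0'⟩, ⟨x1, hx1, hx1'⟩⟩ := hcon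
  have hsub : uIcc x1 x0 ⊆ Ioo a b := by
    intro z hz
    rw [Set.mem_uIcc] at hz
    rcases hz with ⟨h1, h2⟩ | ⟨h1, h2⟩
    · exact ⟨lt_of_lt_of_le hx1.1 h1, lt_of_le_of_lt h2 hx0.2⟩
    · exact ⟨lt_of_lt_of_le hx0.1 h1, lt_of_le_of_lt h2 hx1.2⟩
  have hcontF : ContinuousOn (fun x => g x - x) (uIcc x1 x0) :=
    (hH.2.2.2.mono fun z hz => mem_Icc_of_mem_Ioo hc.1 hc.2.1 (hsub hz)).sub continuousOn_id
  have h0 : (0:ℝ) ∈ uIcc ((fun x => g x - x) x1) ((fun x => g x - x) x0) := by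
    rw [Set.mem_uIcc]
    left
    constructor <;> simp only [] <;> linarith
  obtain ⟨x, hxmem, hxeq⟩ := intermediate_value_uIcc hcontF h0
  simp only [] at hxeq
  exact hc.2.2.2.2.2 x (hsub hxmem) (by linarith)

lemma exists_contracting (G : Subgroup (Equiv.Perm ℝ)) (hG : ∀ g ∈ G, HomeoOnIcc g)
    {g : Equiv.Perm ℝ} {a b : ℝ} (hg : g ∈ G) (hc : IsCompFix g a b) :
    ∃ h ∈ G, IsCompFix h a b ∧ ∀ x ∈ Ioo a b, h x < x := by
  rcases sign_dichotomy (hG g hg) hc with hs | hs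
  · exact ⟨g, hg, hc, hs⟩
  · refine ⟨g⁻¹, inv_mem hg, hc.inv, ?_⟩
    intro x hx
    have hy : g⁻¹ x ∈ Ioo a b :=
      inv_mem_Ioo (hG g hg) hc.1 hc.2.1 hc.2.2.2.1 hc.2.2.2.2.1 hx
    have h2 := hs _ hy
    rwa [show g (g⁻¹ x) = x from g.apply_symm_apply x] at h2

lemma b_lt_false (G : Subgroup (Equiv.Perm ℝ)) (hG : ∀ g ∈ G, HomeoOnIcc g)
    (hnc : ∀ f ∈ G, ∀ g ∈ G, ∀ a b : ℝ, IsCompFix f a b →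
      g a ∉ Ioo a b ∧ g b ∉ Ioo a b)
    {a b b' : ℝ} (h1 : SuccFix G a b) (h2 : SuccFix G a b') (hbb : b < b') : False := by
  obtain ⟨f, hf, hcf⟩ := h1
  obtain ⟨g, hg, hcg⟩ := h2
  obtain ⟨h, hh, hch, hcontr⟩ := exists_contracting G hG hg hcg
  have hbmem : b ∈ Ioo a b' := ⟨hcf.2.2.1, hbb⟩
  have hlt : h b < b := hcontr b hbmem
  have hncb := (hnc f hf h hh a b hcf).2
  have hble : h b ≤ a := by
    by_contra hcontra
    push_neg at hcontra
    exact hncb ⟨hcontra, hlt⟩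
  have hmono := (hG h hh).2.2.1
  have := hmono hcf.1 hcf.2.1 hcf.2.2.1
  rw [hch.2.2.2.1] at this
  linarith

lemma isolation (G : Subgroup (Equiv.Perm ℝ)) (hG : ∀ g ∈ G, HomeoOnIcc g)
    (hnc : ∀ f ∈ G, ∀ g ∈ G, ∀ a b : ℝ, IsCompFix f a b →
      g a ∉ Ioo a b ∧ g b ∉ Ioo a b)
    {a₀ b₀ q : ℝ} (h0 : SuccFix G a₀ b₀) (hq : q ∈ Ioo a₀ b₀) :
    ∃ c, a₀ < c ∧ ∀ a b, SuccFix G a b → a < q → q < b → a ∉ Ioo a₀ c := by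
  obtain ⟨g, hg, hcg⟩ := h0
  obtain ⟨h, hh, hch, hcontr⟩ := exists_contracting G hG hg hcg
  have hHh := hG h hh
  have hqIcc : q ∈ Icc (0:ℝ) 1 := mem_Icc_of_mem_Ioo hcg.1 hcg.2.1 hq
  refine ⟨h q, ?_, ?_⟩
  · have h2 := hHh.2.2.1 hch.1 hqIcc hq.1
    rwa [hch.2.2.2.1] at h2
  · rintro a b hab ha1 ha2 hmem
    obtain ⟨f, hf, hcf⟩ := hab
    have hhqq : h q < q := hcontr q hq
    have haIoo : a ∈ Ioo a₀ b₀ := ⟨hmem.1, lt_trans (lt_trans hmem.2 hhqq) hq.2⟩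
    have hy : h⁻¹ a ∈ Ioo a₀ b₀ :=
      inv_mem_Ioo hHh hch.1 hch.2.1 hch.2.2.2.1 hch.2.2.2.2.1 haIoo
    have hylt : h (h⁻¹ a) < h⁻¹ a := hcontr _ hy
    have hhy : h (h⁻¹ a) = a := h.apply_symm_apply a
    rw [hhy] at hylt
    have hncy := (hnc f hf h⁻¹ (inv_mem hh) a b hcf).1
    have hybe : b ≤ h⁻¹ a := by
      by_contra hby
      push_neg at hby
      exact hncy ⟨hylt, hby⟩
    have hqy : q < h⁻¹ a := lt_of_lt_of_le ha2 hybe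
    have h2 : h q < h (h⁻¹ a) :=
      hHh.2.2.1 hqIcc (mem_Icc_of_mem_Ioo hcg.1 hcg.2.1 hy) hqy
    rw [hhy] at h2
    exact absurd hmem.2 (not_lt.mpr h2.le)

lemma countable_of_right_isolated {A : Set ℝ}
    (h : ∀ a ∈ A, ∃ c, a < c ∧ ∀ x ∈ A, x ∉ Ioo a c) : A.Countable := by
  have hch : ∀ a : A, ∃ r : ℚ, (a:ℝ) < r ∧ ∀ x ∈ A, x ∉ Ioo (a:ℝ) (r:ℝ) := by
    rintro ⟨a, ha⟩
    obtain ⟨c, hac, hc⟩ := h a ha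
    obtain ⟨r, hr1, hr2⟩ := exists_rat_btwn hac
    exact ⟨r, hr1, fun x hx hmem => hc x hx ⟨hmem.1, hmem.2.trans hr2⟩⟩
  choose f hf1 hf2 using hch
  have hinj : Function.Injective f := by
    intro a a' heq
    by_contra hne
    rcases lt_trichotomy (a:ℝ) (a':ℝ) with hlt | heqq | hgt
    · exact hf2 a a'.1 a'.2 ⟨hlt, by rw [heq]; exact hf1 a'⟩
    · exact hne (Subtype.ext heqq)
    · exact hf2 a' a.1 a.2 ⟨hgt, by rw [← heq]; exact hf1 a⟩
  haveI : Countable ↥A := hinj.countable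
  exact Set.countable_coe_iff.mp this

/-- for a group without crossing, the family of pairs of successive
fixed points is at most countable. -/
theorem stmt6 (G : Subgroup (Equiv.Perm ℝ)) (hG : ∀ g ∈ G, HomeoOnIcc g)
    (hnc : ∀ f ∈ G, ∀ g ∈ G, ∀ a b : ℝ, IsCompFix f a b →
      g a ∉ Ioo a b ∧ g b ∉ Ioo a b) :
    Set.Countable {p : ℝ × ℝ | SuccFix G p.1 p.2} := by
  have hsub : {p : ℝ × ℝ | SuccFix G p.1 p.2} ⊆
      ⋃ q : ℚ, {p : ℝ × ℝ | SuccFix G p.1 p.2 ∧ p.1 < (q:ℝ) ∧ (q:ℝ) < p.2} := by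
    rintro ⟨a, b⟩ hp
    obtain ⟨g, hg, hc⟩ := hp
    obtain ⟨r, h1, h2⟩ := exists_rat_btwn hc.2.2.1
    exact mem_iUnion.mpr ⟨r, ⟨g, hg, hc⟩, h1, h2⟩
  refine Set.Countable.mono hsub (Set.countable_iUnion fun q => ?_)
  set A : Set ℝ := {a : ℝ | ∃ b, SuccFix G a b ∧ a < (q:ℝ) ∧ (q:ℝ) < b} with hAdef
  have hA : A.Countable := by
    apply countable_of_right_isolated
    rintro a₀ ⟨b₀, hS, hq1, hq2⟩
    obtain ⟨c, hc1, hc2⟩ := isolation G hG hnc hS ⟨hq1, hq2⟩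
    exact ⟨c, hc1, fun x hx hmem => by
      obtain ⟨b, hxb, hx1, hx2⟩ := hx
      exact hc2 x b hxb hx1 hx2 hmem⟩
  rw [← Set.countable_coe_iff]
  haveI := hA.to_subtype
  have hmap : ∀ p : ↥{p : ℝ × ℝ | SuccFix G p.1 p.2 ∧ p.1 < (q:ℝ) ∧ (q:ℝ) < p.2},
      p.1.1 ∈ A := fun p => ⟨p.1.2, p.2.1, p.2.2.1, p.2.2.2⟩
  have hinj : Function.Injective
      (fun p : ↥{p : ℝ × ℝ | SuccFix G p.1 p.2 ∧ p.1 < (q:ℝ) ∧ (q:ℝ) < p.2} =>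
        (⟨p.1.1, hmap p⟩ : ↥A)) := by
    rintro ⟨⟨a, b⟩, hS, h1, h2⟩ ⟨⟨a', b'⟩, hS', h1', h2'⟩ heq
    simp only [Subtype.mk.injEq] at heq
    subst heq
    have hbb : b = b' := by
      by_contra hne
      rcases lt_or_gt_of_ne hne with hlt | hgt
      · exact b_lt_false G hG hnc hS hS' hlt
      · exact b_lt_false G hG hnc hS' hS hgt
    subst hbb
    rfl
  exact hinj.countable
end
end

section
/- Let G ⊂ Homeo_+([0,1]) be a group admitting a crossing. Then there exist h₁, h₂ ∈ G and a nondegenerate closed interval I ⊂ [0,1] such that h₁(I) and h₂(I) are disjoint and both contained in I. -/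
open Set Filter
open Topology

noncomputable section

/-! ### Auxiliary machinery -/

/-- Bare monotonicity data of an element of `Homeo₊([0,1])` (no continuity). -/
def Mono3 (φ : Equiv.Perm ℝ) : Prop :=
  (∀ x : ℝ, x ∉ Icc (0:ℝ) 1 → φ x = x) ∧
  MapsTo ⇑φ (Icc (0:ℝ) 1) (Icc (0:ℝ) 1) ∧
  StrictMonoOn ⇑φ (Icc (0:ℝ) 1)

lemma HomeoOnIcc.mono3 {φ : Equiv.Perm ℝ} (h : HomeoOnIcc φ) : Mono3 φ :=
  ⟨h.1, h.2.1, h.2.2.1⟩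

lemma Mono3.symm {φ : Equiv.Perm ℝ} (h : Mono3 φ) : Mono3 φ.symm := by
  obtain ⟨hid, hmap, hmono⟩ := h
  have hmap' : MapsTo ⇑φ.symm (Icc (0:ℝ) 1) (Icc (0:ℝ) 1) := by
    intro y hy
    by_contra hmem
    have h1 : φ (φ.symm y) = φ.symm y := hid _ hmem
    rw [φ.apply_symm_apply] at h1
    exact hmem (h1 ▸ hy)
  refine ⟨fun x hx => ?_, hmap', fun x hx y hy hxy => ?_⟩
  · conv_lhs => rw [← hid x hx]
    exact φ.symm_apply_apply x
  · by_contra hcon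
    push_neg at hcon
    have := hmono.monotoneOn (hmap' hy) (hmap' hx) hcon
    rw [φ.apply_symm_apply, φ.apply_symm_apply] at this
    exact absurd hxy (not_lt.2 this)

lemma Ioo_sub {a b : ℝ} (haI : a ∈ Icc (0:ℝ) 1) (hbI : b ∈ Icc (0:ℝ) 1) :
    Ioo a b ⊆ Icc (0:ℝ) 1 :=
  fun x hx => ⟨haI.1.trans hx.1.le, hx.2.le.trans hbI.2⟩

lemma mapsTo_Ioo {φ : Equiv.Perm ℝ} (h : Mono3 φ) {a b : ℝ}
    (haI : a ∈ Icc (0:ℝ) 1) (hbI : b ∈ Icc (0:ℝ) 1)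
    (ha : φ a = a) (hb : φ b = b) : MapsTo ⇑φ (Ioo a b) (Ioo a b) := by
  intro x hx
  have hx' : x ∈ Icc (0:ℝ) 1 := Ioo_sub haI hbI hx
  exact ⟨ha ▸ h.2.2 haI hx' hx.1, hb ▸ h.2.2 hx' hbI hx.2⟩

lemma symm_fix {φ : Equiv.Perm ℝ} {a : ℝ} (ha : φ a = a) : φ.symm a = a :=
  (Equiv.symm_apply_eq φ).2 ha.symm

lemma Mono3.iterate {φ : Equiv.Perm ℝ} (h : Mono3 φ) (k : ℕ) :
    MapsTo (⇑φ)^[k] (Icc (0:ℝ) 1) (Icc (0:ℝ) 1) ∧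
      MonotoneOn (⇑φ)^[k] (Icc (0:ℝ) 1) := by
  induction k with
  | zero => simpa using ⟨mapsTo_id _, fun x _ y _ hxy => hxy⟩
  | succ n ih =>
    rw [Function.iterate_succ']
    refine ⟨h.2.1.comp ih.1, fun x hx y hy hxy => ?_⟩
    exact h.2.2.monotoneOn (ih.1 hx) (ih.1 hy) (ih.2 hx hy hxy)

/-- If `φ` moves every point of `(a,b)` to the left, iterates tend to `a`. -/
lemma tendsto_bot {φ : Equiv.Perm ℝ} (h : Mono3 φ) {a b : ℝ}
    (haI : a ∈ Icc (0:ℝ) 1) (hbI : b ∈ Icc (0:ℝ) 1)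
    (ha : φ a = a) (hb : φ b = b) (hlt : ∀ x ∈ Ioo a b, φ x < x)
    {x₀ : ℝ} (hx₀ : x₀ ∈ Ioo a b) :
    Tendsto (fun n => (⇑φ)^[n] x₀) atTop (𝓝 a) := by
  have hsub := Ioo_sub haI hbI
  have hIooMap := mapsTo_Ioo h haI hbI ha hb
  have hmem : ∀ n, (⇑φ)^[n] x₀ ∈ Ioo a b := fun n => hIooMap.iterate n hx₀
  have hanti : Antitone fun n => (⇑φ)^[n] x₀ := antitone_nat_of_succ_le fun n => by
    rw [Function.iterate_succ_apply']
    exact (hlt _ (hmem n)).le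
  have hbdd : BddBelow (range fun n => (⇑φ)^[n] x₀) :=
    ⟨a, by rintro _ ⟨n, rfl⟩; exact (hmem n).1.le⟩
  have hT := tendsto_atTop_ciInf hanti hbdd
  have haL : a ≤ ⨅ n, (⇑φ)^[n] x₀ := le_ciInf fun n => (hmem n).1.le
  have hLb : (⨅ n, (⇑φ)^[n] x₀) < b := (ciInf_le hbdd 0).trans_lt (hmem 0).2
  suffices hLa : (⨅ n, (⇑φ)^[n] x₀) = a by rwa [hLa] at hT
  by_contra hne
  have haL' : a < ⨅ n, (⇑φ)^[n] x₀ := lt_of_le_of_ne haL (Ne.symm hne)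
  have hw : φ.symm (⨅ n, (⇑φ)^[n] x₀) ∈ Ioo a b :=
    mapsTo_Ioo h.symm haI hbI (symm_fix ha) (symm_fix hb) ⟨haL', hLb⟩
  have hwL : (⨅ n, (⇑φ)^[n] x₀) < φ.symm (⨅ n, (⇑φ)^[n] x₀) := by
    have := hlt _ hw
    rwa [φ.apply_symm_apply] at this
  obtain ⟨n, hn⟩ := exists_lt_of_ciInf_lt hwL
  have hstep : (⇑φ)^[n + 1] x₀ < ⨅ n, (⇑φ)^[n] x₀ := by
    rw [Function.iterate_succ_apply']
    have := h.2.2 (hsub (hmem n)) (hsub hw) hn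
    rwa [φ.apply_symm_apply] at this
  exact absurd (ciInf_le hbdd (n + 1)) (not_le.2 hstep)

/-- If `φ` moves every point of `(a,b)` to the right, iterates tend to `b`. -/
lemma tendsto_top {φ : Equiv.Perm ℝ} (h : Mono3 φ) {a b : ℝ}
    (haI : a ∈ Icc (0:ℝ) 1) (hbI : b ∈ Icc (0:ℝ) 1)
    (ha : φ a = a) (hb : φ b = b) (hgt : ∀ x ∈ Ioo a b, x < φ x)
    {x₀ : ℝ} (hx₀ : x₀ ∈ Ioo a b) :
    Tendsto (fun n => (⇑φ)^[n] x₀) atTop (𝓝 b) := by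
  have hsub := Ioo_sub haI hbI
  have hIooMap := mapsTo_Ioo h haI hbI ha hb
  have hmem : ∀ n, (⇑φ)^[n] x₀ ∈ Ioo a b := fun n => hIooMap.iterate n hx₀
  have hmono : Monotone fun n => (⇑φ)^[n] x₀ := monotone_nat_of_le_succ fun n => by
    rw [Function.iterate_succ_apply']
    exact (hgt _ (hmem n)).le
  have hbdd : BddAbove (range fun n => (⇑φ)^[n] x₀) :=
    ⟨b, by rintro _ ⟨n, rfl⟩; exact (hmem n).2.le⟩
  have hT := tendsto_atTop_ciSup hmono hbdd
  have hLb : (⨆ n, (⇑φ)^[n] x₀) ≤ b := ciSup_le fun n => (hmem n).2.le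
  have haL : a < ⨆ n, (⇑φ)^[n] x₀ := (hmem 0).1.trans_le (le_ciSup hbdd 0)
  suffices hLa : (⨆ n, (⇑φ)^[n] x₀) = b by rwa [hLa] at hT
  by_contra hne
  have hLb' : (⨆ n, (⇑φ)^[n] x₀) < b := lt_of_le_of_ne hLb hne
  have hw : φ.symm (⨆ n, (⇑φ)^[n] x₀) ∈ Ioo a b :=
    mapsTo_Ioo h.symm haI hbI (symm_fix ha) (symm_fix hb) ⟨haL, hLb'⟩
  have hwL : φ.symm (⨆ n, (⇑φ)^[n] x₀) < ⨆ n, (⇑φ)^[n] x₀ := by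
    have := hgt _ hw
    rwa [φ.apply_symm_apply] at this
  obtain ⟨n, hn⟩ := exists_lt_of_lt_ciSup hwL
  have hstep : (⨆ n, (⇑φ)^[n] x₀) < (⇑φ)^[n + 1] x₀ := by
    rw [Function.iterate_succ_apply']
    have := h.2.2 (hsub hw) (hsub (hmem n)) hn
    rwa [φ.apply_symm_apply] at this
  exact absurd (le_ciSup hbdd (n + 1)) (not_le.2 hstep)

lemma sign_dichotomy_s7 {f : Equiv.Perm ℝ} (hf : ContinuousOn ⇑f (Icc (0:ℝ) 1))
    {a b : ℝ} (haI : a ∈ Icc (0:ℝ) 1) (hbI : b ∈ Icc (0:ℝ) 1)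
    (hfix : ∀ x ∈ Ioo a b, f x ≠ x) :
    (∀ x ∈ Ioo a b, f x < x) ∨ (∀ x ∈ Ioo a b, x < f x) := by
  have hsub := Ioo_sub haI hbI
  by_contra hcon
  push_neg at hcon
  obtain ⟨⟨x, hx, hx'⟩, ⟨y, hy, hy'⟩⟩ := hcon
  have hxlt : x < f x := lt_of_le_of_ne hx' (fun h => hfix x hx h.symm)
  have hylt : f y < y := lt_of_le_of_ne hy' (hfix y hy)
  set F : ℝ → ℝ := fun t => f t - t with hF
  have key : ∀ u v : ℝ, u ∈ Ioo a b → v ∈ Ioo a b → u ≤ v →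
      0 ∈ Icc (F v) (F u) ∨ 0 ∈ Icc (F u) (F v) → False := by
    intro u v hu hv huv h0
    have hIcc : Icc u v ⊆ Ioo a b := fun t ht => ⟨hu.1.trans_le ht.1, ht.2.trans_lt hv.2⟩
    have hcont : ContinuousOn F (Icc u v) :=
      (hf.mono fun t ht => hsub (hIcc ht)).sub continuousOn_id
    have himg : (0:ℝ) ∈ F '' Icc u v := by
      rcases h0 with h0 | h0
      · exact intermediate_value_Icc' huv hcont h0
      · exact intermediate_value_Icc huv hcont h0
    obtain ⟨z, hz, hz0⟩ := himg
    exact hfix z (hIcc hz) (by simpa [hF, sub_eq_zero] using hz0)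
  have hFx : 0 < F x := sub_pos.2 hxlt
  have hFy : F y < 0 := sub_neg.2 hylt
  rcases le_total x y with hxy | hyx
  · exact key x y hx hy hxy (Or.inl ⟨hFy.le, hFx.le⟩)
  · exact key y x hy hx hyx (Or.inr ⟨hFy.le, hFx.le⟩)

lemma case_left (G : Subgroup (Equiv.Perm ℝ)) {φ g : Equiv.Perm ℝ}
    (hφG : φ ∈ G) (hgG : g ∈ G) (h3 : Mono3 φ) (hg : HomeoOnIcc g)
    {a b : ℝ} (haI : a ∈ Icc (0:ℝ) 1) (hbI : b ∈ Icc (0:ℝ) 1)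
    (ha : φ a = a) (hb : φ b = b) (hlt : ∀ x ∈ Ioo a b, φ x < x)
    (hc : g a ∈ Ioo a b) :
    ∃ h₁ ∈ G, ∃ h₂ ∈ G, ∃ u v : ℝ, u < v ∧ Icc u v ⊆ Icc (0:ℝ) 1 ∧
      ⇑h₁ '' Icc u v ⊆ Icc u v ∧ ⇑h₂ '' Icc u v ⊆ Icc u v ∧
      Disjoint (⇑h₁ '' Icc u v) (⇑h₂ '' Icc u v) := by
  set c := g a with hcdef
  set e := (c + b) / 2 with hedef
  have hce : c < e := by rw [hedef]; linarith [hc.2]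
  have heb : e < b := by rw [hedef]; linarith [hc.2]
  have heIoo : e ∈ Ioo a b := ⟨hc.1.trans hce, heb⟩
  have hsub := Ioo_sub haI hbI
  have hcI : c ∈ Icc (0:ℝ) 1 := hsub hc
  have heI : e ∈ Icc (0:ℝ) 1 := hsub heIoo
  have hIooMap := mapsTo_Ioo h3 haI hbI ha hb
  have hmemc : ∀ n, (⇑φ)^[n] c ∈ Ioo a b := fun n => hIooMap.iterate n hc
  have T1 : Tendsto (fun n => (⇑φ)^[n] c) atTop (𝓝 a) :=
    tendsto_bot h3 haI hbI ha hb hlt hc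
  have T1' : Tendsto (fun n => (⇑φ)^[n] c) atTop (𝓝[Icc (0:ℝ) 1] a) :=
    tendsto_nhdsWithin_of_tendsto_nhds_of_eventually_within _ T1
      (Eventually.of_forall fun n => hsub (hmemc n))
  have T2 : Tendsto (fun n => g ((⇑φ)^[n] c)) atTop (𝓝 c) :=
    ((hg.2.2.2 a haI).tendsto).comp T1'
  obtain ⟨n, hn⟩ := (T2.eventually_lt_const hce).exists
  have T3 : Tendsto (fun m => (⇑φ)^[m] e) atTop (𝓝 a) :=
    tendsto_bot h3 haI hbI ha hb hlt heIoo
  obtain ⟨m, hm⟩ := (T3.eventually_lt_const hc.1).exists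
  have hmono : ∀ k, MonotoneOn (⇑φ)^[k] (Icc (0:ℝ) 1) := fun k => (h3.iterate k).2
  have hmap : ∀ k, MapsTo (⇑φ)^[k] (Icc (0:ℝ) 1) (Icc (0:ℝ) 1) := fun k => (h3.iterate k).1
  have hfixa : ∀ k, (⇑φ)^[k] a = a := fun k => Function.iterate_fixed ha k
  have hkey : (⇑φ)^[m + 1] c < (⇑φ)^[m] c := by
    rw [Function.iterate_succ_apply']
    exact hlt _ (hmemc m)
  have hdec : ∀ k, (⇑φ)^[k] c ≤ c := by
    intro k
    induction k with
    | zero => exact le_refl _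
    | succ k ih =>
      rw [Function.iterate_succ_apply']
      exact (hlt _ (hmemc k)).le.trans ih
  have hpow : ∀ (k : ℕ) (x : ℝ), (φ ^ k) x = (⇑φ)^[k] x := fun k x => by
    rw [Equiv.Perm.iterate_eq_pow]
  have hIsub : Icc a c ⊆ Icc (0:ℝ) 1 := fun x hx =>
    ⟨haI.1.trans hx.1, hx.2.trans hcI.2⟩
  have fact1 : ∀ x ∈ Icc a c, (⇑φ)^[m + 1] x ∈ Icc a ((⇑φ)^[m + 1] c) := by
    intro x hx
    have hxI := hIsub hx
    constructor
    · calc a = (⇑φ)^[m + 1] a := (hfixa _).symm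
        _ ≤ (⇑φ)^[m + 1] x := hmono _ haI hxI hx.1
    · exact hmono _ hxI hcI hx.2
  have fact2 : ∀ x ∈ Icc a c, (⇑φ)^[m] (g ((⇑φ)^[n] x)) ∈ Icc ((⇑φ)^[m] c) c := by
    intro x hx
    have hxI := hIsub hx
    have h1 : (⇑φ)^[n] x ∈ Icc (0:ℝ) 1 := hmap n hxI
    have h1a : a ≤ (⇑φ)^[n] x := (hfixa n) ▸ hmono n haI hxI hx.1
    have h1c : (⇑φ)^[n] x ≤ (⇑φ)^[n] c := hmono n hxI hcI hx.2
    have h2 : g ((⇑φ)^[n] x) ∈ Icc (0:ℝ) 1 := hg.2.1 h1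
    have h2c : c ≤ g ((⇑φ)^[n] x) := hg.2.2.1.monotoneOn haI h1 h1a
    have h2e : g ((⇑φ)^[n] x) ≤ e :=
      (hg.2.2.1.monotoneOn h1 (hsub (hmemc n)) h1c).trans hn.le
    constructor
    · exact hmono m hcI h2 h2c
    · exact (hmono m h2 heI h2e).trans hm.le
  refine ⟨φ ^ (m + 1), pow_mem hφG _, φ ^ m * g * φ ^ n,
    mul_mem (mul_mem (pow_mem hφG m) hgG) (pow_mem hφG n), a, c, hc.1, hIsub, ?_, ?_, ?_⟩
  · rintro _ ⟨x, hx, rfl⟩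
    rw [hpow]
    have := fact1 x hx
    exact ⟨this.1, this.2.trans (hdec (m + 1))⟩
  · rintro _ ⟨x, hx, rfl⟩
    rw [Equiv.Perm.mul_apply, Equiv.Perm.mul_apply, hpow, hpow]
    have := fact2 x hx
    exact ⟨(hmemc m).1.le.trans this.1, this.2⟩
  · rw [Set.disjoint_left]
    rintro _ ⟨x, hx, rfl⟩ ⟨y, hy, hyx⟩
    rw [Equiv.Perm.mul_apply, Equiv.Perm.mul_apply, hpow, hpow] at hyx
    have h1 := (fact1 x hx).2
    rw [← hpow] at h1
    have h2 := (fact2 y hy).1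
    rw [hyx] at h2
    exact absurd (h2.trans h1) (not_le.2 hkey)

lemma case_right (G : Subgroup (Equiv.Perm ℝ)) {ψ g : Equiv.Perm ℝ}
    (hψG : ψ ∈ G) (hgG : g ∈ G) (h3 : Mono3 ψ) (hg : HomeoOnIcc g)
    {a b : ℝ} (haI : a ∈ Icc (0:ℝ) 1) (hbI : b ∈ Icc (0:ℝ) 1)
    (ha : ψ a = a) (hb : ψ b = b) (hgt : ∀ x ∈ Ioo a b, x < ψ x)
    (hc : g b ∈ Ioo a b) :
    ∃ h₁ ∈ G, ∃ h₂ ∈ G, ∃ u v : ℝ, u < v ∧ Icc u v ⊆ Icc (0:ℝ) 1 ∧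
      ⇑h₁ '' Icc u v ⊆ Icc u v ∧ ⇑h₂ '' Icc u v ⊆ Icc u v ∧
      Disjoint (⇑h₁ '' Icc u v) (⇑h₂ '' Icc u v) := by
  set c := g b with hcdef
  set e := (a + c) / 2 with hedef
  have hec : e < c := by rw [hedef]; linarith [hc.1]
  have hae : a < e := by rw [hedef]; linarith [hc.1]
  have heIoo : e ∈ Ioo a b := ⟨hae, hec.trans hc.2⟩
  have hsub := Ioo_sub haI hbI
  have hcI : c ∈ Icc (0:ℝ) 1 := hsub hc
  have heI : e ∈ Icc (0:ℝ) 1 := hsub heIoo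
  have hIooMap := mapsTo_Ioo h3 haI hbI ha hb
  have hmemc : ∀ n, (⇑ψ)^[n] c ∈ Ioo a b := fun n => hIooMap.iterate n hc
  have T1 : Tendsto (fun n => (⇑ψ)^[n] c) atTop (𝓝 b) :=
    tendsto_top h3 haI hbI ha hb hgt hc
  have T1' : Tendsto (fun n => (⇑ψ)^[n] c) atTop (𝓝[Icc (0:ℝ) 1] b) :=
    tendsto_nhdsWithin_of_tendsto_nhds_of_eventually_within _ T1
      (Eventually.of_forall fun n => hsub (hmemc n))
  have T2 : Tendsto (fun n => g ((⇑ψ)^[n] c)) atTop (𝓝 c) :=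
    ((hg.2.2.2 b hbI).tendsto).comp T1'
  obtain ⟨n, hn⟩ := (T2.eventually_const_lt hec).exists
  have T3 : Tendsto (fun m => (⇑ψ)^[m] e) atTop (𝓝 b) :=
    tendsto_top h3 haI hbI ha hb hgt heIoo
  obtain ⟨m, hm⟩ := (T3.eventually_const_lt hc.2).exists
  have hmono : ∀ k, MonotoneOn (⇑ψ)^[k] (Icc (0:ℝ) 1) := fun k => (h3.iterate k).2
  have hmap : ∀ k, MapsTo (⇑ψ)^[k] (Icc (0:ℝ) 1) (Icc (0:ℝ) 1) := fun k => (h3.iterate k).1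
  have hfixb : ∀ k, (⇑ψ)^[k] b = b := fun k => Function.iterate_fixed hb k
  have hkey : (⇑ψ)^[m] c < (⇑ψ)^[m + 1] c := by
    rw [Function.iterate_succ_apply']
    exact hgt _ (hmemc m)
  have hinc : ∀ k, c ≤ (⇑ψ)^[k] c := by
    intro k
    induction k with
    | zero => exact le_refl _
    | succ k ih =>
      rw [Function.iterate_succ_apply']
      exact ih.trans (hgt _ (hmemc k)).le
  have hpow : ∀ (k : ℕ) (x : ℝ), (ψ ^ k) x = (⇑ψ)^[k] x := fun k x => by
    rw [Equiv.Perm.iterate_eq_pow]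
  have hIsub : Icc c b ⊆ Icc (0:ℝ) 1 := fun x hx =>
    ⟨hcI.1.trans hx.1, hx.2.trans hbI.2⟩
  have fact1 : ∀ x ∈ Icc c b, (⇑ψ)^[m + 1] x ∈ Icc ((⇑ψ)^[m + 1] c) b := by
    intro x hx
    have hxI := hIsub hx
    constructor
    · exact hmono _ hcI hxI hx.1
    · calc (⇑ψ)^[m + 1] x ≤ (⇑ψ)^[m + 1] b := hmono _ hxI hbI hx.2
        _ = b := hfixb _
  have fact2 : ∀ x ∈ Icc c b, (⇑ψ)^[m] (g ((⇑ψ)^[n] x)) ∈ Icc c ((⇑ψ)^[m] c) := by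
    intro x hx
    have hxI := hIsub hx
    have h1 : (⇑ψ)^[n] x ∈ Icc (0:ℝ) 1 := hmap n hxI
    have h1b : (⇑ψ)^[n] x ≤ b := (hfixb n) ▸ hmono n hxI hbI hx.2
    have h1c : (⇑ψ)^[n] c ≤ (⇑ψ)^[n] x := hmono n hcI hxI hx.1
    have h2 : g ((⇑ψ)^[n] x) ∈ Icc (0:ℝ) 1 := hg.2.1 h1
    have h2c : g ((⇑ψ)^[n] x) ≤ c := hg.2.2.1.monotoneOn h1 hbI h1b
    have h2e : e ≤ g ((⇑ψ)^[n] x) :=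
      hn.le.trans (hg.2.2.1.monotoneOn (hsub (hmemc n)) h1 h1c)
    constructor
    · exact hm.le.trans (hmono m heI h2 h2e)
    · exact hmono m h2 hcI h2c
  refine ⟨ψ ^ (m + 1), pow_mem hψG _, ψ ^ m * g * ψ ^ n,
    mul_mem (mul_mem (pow_mem hψG m) hgG) (pow_mem hψG n), c, b, hc.2, hIsub, ?_, ?_, ?_⟩
  · rintro _ ⟨x, hx, rfl⟩
    rw [hpow]
    have := fact1 x hx
    exact ⟨(hinc (m + 1)).trans this.1, this.2⟩
  · rintro _ ⟨x, hx, rfl⟩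
    rw [Equiv.Perm.mul_apply, Equiv.Perm.mul_apply, hpow, hpow]
    have := fact2 x hx
    exact ⟨this.1, this.2.trans (hmemc m).2.le⟩
  · rw [Set.disjoint_left]
    rintro _ ⟨x, hx, rfl⟩ ⟨y, hy, hyx⟩
    rw [Equiv.Perm.mul_apply, Equiv.Perm.mul_apply, hpow, hpow] at hyx
    have h1 := (fact1 x hx).1
    rw [← hpow] at h1
    have h2 := (fact2 y hy).2
    rw [hyx] at h2
    exact absurd (h1.trans h2) (not_le.2 hkey)

/-- a group admitting a crossing contains two elements mapping some
nondegenerate closed interval into itself with disjoint images. -/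
theorem stmt7 (G : Subgroup (Equiv.Perm ℝ)) (hG : ∀ g ∈ G, HomeoOnIcc g)
    (hcross : ∃ f ∈ G, ∃ g ∈ G, ∃ a b : ℝ, IsCompFix f a b ∧
      (g a ∈ Ioo a b ∨ g b ∈ Ioo a b)) :
    ∃ h₁ ∈ G, ∃ h₂ ∈ G, ∃ u v : ℝ, u < v ∧ Icc u v ⊆ Icc (0:ℝ) 1 ∧
      ⇑h₁ '' Icc u v ⊆ Icc u v ∧ ⇑h₂ '' Icc u v ⊆ Icc u v ∧
      Disjoint (⇑h₁ '' Icc u v) (⇑h₂ '' Icc u v) := by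
  obtain ⟨f, hfG, g, hgG, a, b, ⟨haI, hbI, hab, hfa, hfb, hfix⟩, hor⟩ := hcross
  have hf := hG f hfG
  have hg := hG g hgG
  have hinv3 : Mono3 f⁻¹ := hf.mono3.symm
  have hinva : (f⁻¹ : Equiv.Perm ℝ) a = a := symm_fix hfa
  have hinvb : (f⁻¹ : Equiv.Perm ℝ) b = b := symm_fix hfb
  have hsymmIoo : MapsTo ⇑f.symm (Ioo a b) (Ioo a b) :=
    mapsTo_Ioo hf.mono3.symm haI hbI (symm_fix hfa) (symm_fix hfb)
  rcases sign_dichotomy_s7 hf.2.2.2 haI hbI hfix with hlt | hgt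
  · -- f moves left
    rcases hor with hga | hgb
    · exact case_left G hfG hgG hf.mono3 hg haI hbI hfa hfb hlt hga
    · -- need a right-mover: f⁻¹
      have hgt' : ∀ x ∈ Ioo a b, x < f⁻¹ x := by
        intro x hx
        have hx' := hsymmIoo hx
        have := hlt _ hx'
        rw [f.apply_symm_apply] at this
        exact this
      exact case_right G (inv_mem hfG) hgG hinv3 hg haI hbI hinva hinvb hgt' hgb
  · rcases hor with hga | hgb
    · have hlt' : ∀ x ∈ Ioo a b, f⁻¹ x < x := by
        intro x hx
        have hx' := hsymmIoo hx
        have := hgt _ hx'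
        rw [f.apply_symm_apply] at this
        exact this
      exact case_left G (inv_mem hfG) hgG hinv3 hg haI hbI hinva hinvb hlt' hga
    · exact case_right G hfG hgG hf.mono3 hg haI hbI hfa hfb hgt hgb
end
end

section
/- Let I be a compact interval and f, g : I → I be continuous injective maps with f(I) ∩ g(I) = ∅. Then there exists an infinite sequence (ω_i), with each ω_i ∈ {f, g}, such that limsup_{n→∞} (1/n) · log ℓ(ω_{n−1}∘⋯∘ω_0(I)) < 0, where ℓ denotes length (Lebesgue measure) of the interval. -/
open Set Filter

noncomputable section

/-- The image of `I` under the composition `ω (n-1) ∘ ⋯ ∘ ω 0`. -/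
def wordImage (ω : ℕ → ℝ → ℝ) (I : Set ℝ) : ℕ → Set ℝ
  | 0 => I
  | n + 1 => ω n '' wordImage ω I n

namespace Stmt8

open MeasureTheory
open scoped Classical

/-- alphabet -/
def mp (f g : ℝ → ℝ) (x : Bool) : ℝ → ℝ := if x then f else g

/-- image of `Icc a b` under a finite word (head of list applied last). -/
def Jw (f g : ℝ → ℝ) (a b : ℝ) : List Bool → Set ℝ
  | [] => Icc a b
  | x :: w => mp f g x '' Jw f g a b w

/-- all hypotheses bundled -/
structure Hyp (a b : ℝ) (f g : ℝ → ℝ) : Prop where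
  hab : a < b
  hfc : ContinuousOn f (Icc a b)
  hgc : ContinuousOn g (Icc a b)
  hfi : InjOn f (Icc a b)
  hgi : InjOn g (Icc a b)
  hfm : MapsTo f (Icc a b) (Icc a b)
  hgm : MapsTo g (Icc a b) (Icc a b)
  hdisj : Disjoint (f '' Icc a b) (g '' Icc a b)

variable {a b : ℝ} {f g : ℝ → ℝ}

lemma mp_cont' (H : Hyp a b f g) (x : Bool) : ContinuousOn (mp f g x) (Icc a b) := by
  cases x
  · simpa [mp] using H.hgc
  · simpa [mp] using H.hfc
lemma mp_inj (H : Hyp a b f g) (x : Bool) : InjOn (mp f g x) (Icc a b) := by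
  cases x
  · simpa [mp] using H.hgi
  · simpa [mp] using H.hfi
lemma mp_maps (H : Hyp a b f g) (x : Bool) : MapsTo (mp f g x) (Icc a b) (Icc a b) := by
  cases x
  · simpa [mp] using H.hgm
  · simpa [mp] using H.hfm

/-- every word image is a nondegenerate compact subinterval -/
lemma Jw_struct (H : Hyp a b f g) : ∀ w : List Bool,
    ∃ c d : ℝ, c < d ∧ a ≤ c ∧ d ≤ b ∧ Jw f g a b w = Icc c d := by
  intro w
  induction w with
  | nil => exact ⟨a, b, H.hab, le_refl _, le_refl _, rfl⟩
  | cons x w ih =>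
    obtain ⟨c, d, hcd, hac, hdb, hw⟩ := ih
    have hsub : Icc c d ⊆ Icc a b := Icc_subset_Icc hac hdb
    have hc : ContinuousOn (mp f g x) (Icc c d) := (mp_cont' H x).mono hsub
    have himg : mp f g x '' Icc c d
        = Icc (sInf (mp f g x '' Icc c d)) (sSup (mp f g x '' Icc c d)) :=
      hc.image_Icc hcd.le
    set c' := sInf (mp f g x '' Icc c d)
    set d' := sSup (mp f g x '' Icc c d)
    have hcmem : c ∈ Icc a b := hsub (left_mem_Icc.2 hcd.le)
    have hdmem : d ∈ Icc a b := hsub (right_mem_Icc.2 hcd.le)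
    have h1 : mp f g x c ∈ Icc c' d' := by
      rw [← himg]; exact mem_image_of_mem _ (left_mem_Icc.2 hcd.le)
    have h2 : mp f g x d ∈ Icc c' d' := by
      rw [← himg]; exact mem_image_of_mem _ (right_mem_Icc.2 hcd.le)
    have hne : mp f g x c ≠ mp f g x d := fun h => hcd.ne (mp_inj H x hcmem hdmem h)
    have hcd' : c' < d' := by
      rcases lt_or_ge c' d' with h | h
      · exact h
      · exact absurd (le_antisymm (h1.2.trans (h.trans h2.1)) (h2.2.trans (h.trans h1.1))) hne
    have hIab : mp f g x '' Icc c d ⊆ Icc a b :=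
      ((mp_maps H x).mono_left hsub).image_subset
    have hc'm : c' ∈ Icc a b := hIab (himg ▸ left_mem_Icc.2 hcd'.le)
    have hd'm : d' ∈ Icc a b := hIab (himg ▸ right_mem_Icc.2 hcd'.le)
    exact ⟨c', d', hcd', hc'm.1, hd'm.2, by rw [Jw, hw, himg]⟩

lemma Jw_subset (H : Hyp a b f g) (w : List Bool) : Jw f g a b w ⊆ Icc a b := by
  obtain ⟨c, d, hcd, hac, hdb, hw⟩ := Jw_struct H w
  rw [hw]; exact Icc_subset_Icc hac hdb

lemma Jw_meas (H : Hyp a b f g) (w : List Bool) : MeasurableSet (Jw f g a b w) := by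
  obtain ⟨c, d, _, _, _, hw⟩ := Jw_struct H w
  rw [hw]; exact measurableSet_Icc

lemma Jw_disj (H : Hyp a b f g) : ∀ w₁ w₂ : List Bool, w₁.length = w₂.length → w₁ ≠ w₂ →
    Disjoint (Jw f g a b w₁) (Jw f g a b w₂) := by
  intro w₁
  induction w₁ with
  | nil => intro w₂ hl hne; exact absurd (List.length_eq_zero_iff.1 hl.symm).symm hne
  | cons x u ih =>
    rintro (_ | ⟨y, v⟩) hl hne
    · exact absurd hl (by simp)
    · by_cases hxy : x = y
      · subst hxy
        have huv : u ≠ v := fun h => hne (by rw [h])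
        have : Disjoint (Jw f g a b u) (Jw f g a b v) := ih v (by simpa using hl) huv
        exact this.image (mp_inj H x) (Jw_subset H u) (Jw_subset H v)
      · have h1 : Jw f g a b (x :: u) ⊆ mp f g x '' Icc a b :=
          image_mono (Jw_subset H u)
        have h2 : Jw f g a b (y :: v) ⊆ mp f g y '' Icc a b :=
          image_mono (Jw_subset H v)
        have hd : Disjoint (mp f g x '' Icc a b) (mp f g y '' Icc a b) := by
          cases x <;> cases y <;> simp_all [mp] <;> [exact H.hdisj.symm; exact H.hdisj]
        exact hd.mono h1 h2

/-- finite words of length `n` -/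
def W : ℕ → Finset (List Bool)
  | 0 => {[]}
  | n + 1 => ((W n).image (true :: ·)) ∪ ((W n).image (false :: ·))

lemma mem_W {n : ℕ} {w : List Bool} : w ∈ W n ↔ w.length = n := by
  induction n generalizing w with
  | zero => simp [W, List.length_eq_zero_iff]
  | succ n ih =>
    constructor
    · intro hw
      rcases Finset.mem_union.1 hw with h | h <;>
        · obtain ⟨u, hu, rfl⟩ := Finset.mem_image.1 h
          simp [ih.1 hu]
    · intro hw
      match w with
      | x :: u =>
        have hu : u ∈ W n := ih.2 (by simpa using hw)
        cases x
        · exact Finset.mem_union.2 (Or.inr (Finset.mem_image.2 ⟨u, hu, rfl⟩))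
        · exact Finset.mem_union.2 (Or.inl (Finset.mem_image.2 ⟨u, hu, rfl⟩))

lemma card_W (n : ℕ) : (W n).card = 2 ^ n := by
  induction n with
  | zero => rfl
  | succ n ih =>
    have hdisj : Disjoint ((W n).image (true :: ·)) ((W n).image (false :: ·)) := by
      simp only [Finset.disjoint_left, Finset.mem_image]
      rintro w ⟨u, _, rfl⟩ ⟨v, _, h⟩
      simp at h
    rw [W, Finset.card_union_of_disjoint hdisj,
      Finset.card_image_of_injective _ (List.cons_injective),
      Finset.card_image_of_injective _ (List.cons_injective), ih]
    ring

/-- threshold at level m -/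
def thr (a b : ℝ) (m : ℕ) : ENNReal := ENNReal.ofReal ((b - a) * (3 / 4) ^ m)

/-- heavy words of length m -/
def Hs (f g : ℝ → ℝ) (a b : ℝ) (m : ℕ) : Finset (List Bool) :=
  (W m).filter (fun w => thr a b m < volume (Jw f g a b w))

lemma sum_vol_le (H : Hyp a b f g) (n : ℕ) :
    ∑ w ∈ W n, volume (Jw f g a b w) ≤ ENNReal.ofReal (b - a) := by
  have hpd : ((W n : Finset (List Bool)) : Set (List Bool)).PairwiseDisjoint
      (Jw f g a b) := by
    intro w₁ h₁ w₂ h₂ hne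
    exact Jw_disj H w₁ w₂ ((mem_W.1 h₁).trans (mem_W.1 h₂).symm) hne
  rw [← measure_biUnion_finset hpd (fun w _ => Jw_meas H w)]
  calc volume (⋃ w ∈ W n, Jw f g a b w) ≤ volume (Icc a b) :=
        measure_mono (iUnion₂_subset fun w _ => Jw_subset H w)
    _ = ENNReal.ofReal (b - a) := Real.volume_Icc

lemma card_Hs (H : Hyp a b f g) (m : ℕ) :
    ((Hs f g a b m).card : ℝ) ≤ (4 / 3) ^ m := by
  have hL : (0 : ℝ) < b - a := sub_pos.2 H.hab
  have hq : (0 : ℝ) < (3 / 4) ^ m := by positivity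
  have key : ((Hs f g a b m).card : ℕ) • thr a b m ≤ ENNReal.ofReal (b - a) := by
    calc ((Hs f g a b m).card : ℕ) • thr a b m
        ≤ ∑ w ∈ Hs f g a b m, volume (Jw f g a b w) :=
          Finset.card_nsmul_le_sum _ _ _ (fun w hw => ((Finset.mem_filter.1 hw).2).le)
      _ ≤ ∑ w ∈ W m, volume (Jw f g a b w) :=
          Finset.sum_le_sum_of_subset (Finset.filter_subset _ _)
      _ ≤ ENNReal.ofReal (b - a) := sum_vol_le H m
  have key2 : ((Hs f g a b m).card : ℝ) * ((b - a) * (3 / 4) ^ m) ≤ b - a := by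
    rw [← ENNReal.ofReal_le_ofReal_iff hL.le, ENNReal.ofReal_mul (by positivity),
      ENNReal.ofReal_natCast]
    simpa [thr, nsmul_eq_mul] using key
  have h1 : ((Hs f g a b m).card : ℝ) * (3 / 4) ^ m ≤ 1 := by
    by_contra hcon
    push_neg at hcon
    have h3 : (b - a) * 1 < (b - a) * (((Hs f g a b m).card : ℝ) * (3 / 4) ^ m) :=
      mul_lt_mul_of_pos_left hcon hL
    nlinarith [key2, h3]
  have h2 : ((3 : ℝ) / 4) ^ m * (4 / 3) ^ m = 1 := by
    rw [← mul_pow]; norm_num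
  calc ((Hs f g a b m).card : ℝ)
      = ((Hs f g a b m).card : ℝ) * ((3 / 4) ^ m * (4 / 3) ^ m) := by rw [h2, mul_one]
    _ = (((Hs f g a b m).card : ℝ) * (3 / 4) ^ m) * (4 / 3) ^ m := by ring
    _ ≤ 1 * (4 / 3) ^ m := by
        apply mul_le_mul_of_nonneg_right h1 (by positivity)
    _ = (4 / 3) ^ m := one_mul _

def Light (f g : ℝ → ℝ) (a b : ℝ) (w : List Bool) : Prop :=
  volume (Jw f g a b w) ≤ thr a b w.length

def Good (f g : ℝ → ℝ) (a b : ℝ) (w : List Bool) : Prop :=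
  ∀ k : ℕ, 3 ≤ w.length - k → Light f g a b (w.drop k)

lemma good_drop {w : List Bool} (hw : Good f g a b w) (k : ℕ) : Good f g a b (w.drop k) := by
  intro j hj
  rw [List.drop_drop]
  exact hw (k + j) (by simp [List.length_drop] at hj ⊢; omega)

lemma sum_geom_aux (t : ℕ) : ∑ j ∈ Finset.range t, (2 / 3 : ℝ) ^ j ≤ 3 := by
  rw [geom_sum_eq (by norm_num)]
  have h : (0 : ℝ) ≤ (2 / 3) ^ t := by positivity
  rw [div_le_iff_of_neg (by norm_num : (2 / 3 : ℝ) - 1 < 0)]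
  linarith

lemma sum_Icc_le (n : ℕ) : ∑ m ∈ Finset.Icc 3 n, (2 / 3 : ℝ) ^ m ≤ 8 / 9 := by
  rw [← Finset.Ico_add_one_right_eq_Icc, Finset.sum_Ico_eq_sum_range]
  simp_rw [pow_add]
  rw [← Finset.mul_sum]
  have := sum_geom_aux (n + 1 - 3)
  nlinarith [this]

lemma exists_good (H : Hyp a b f g) (n : ℕ) :
    ∃ w : List Bool, w.length = n ∧ Good f g a b w := by
  set Bad := (W n).filter (fun w => ¬ Good f g a b w) with hBad
  have hsub : Bad ⊆ (Finset.Icc 3 n).biUnion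
      (fun m => (W n).filter (fun w => thr a b m < volume (Jw f g a b (w.drop (n - m))))) := by
    intro w hw
    obtain ⟨hwW, hbad⟩ := Finset.mem_filter.1 hw
    have hwl : w.length = n := mem_W.1 hwW
    rw [Good] at hbad
    push_neg at hbad
    obtain ⟨k, hk3, hkl⟩ := hbad
    rw [hwl] at hk3
    rw [Light] at hkl
    push_neg at hkl
    refine Finset.mem_biUnion.2 ⟨n - k, Finset.mem_Icc.2 ⟨hk3, by omega⟩, ?_⟩
    refine Finset.mem_filter.2 ⟨hwW, ?_⟩
    have h1 : n - (n - k) = k := by omega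
    rw [h1]
    have h2 : (w.drop k).length = n - k := by simp [List.length_drop, hwl]
    rwa [h2] at hkl
  -- per-level counting
  have hlev : ∀ m ∈ Finset.Icc 3 n,
      ((W n).filter (fun w => thr a b m < volume (Jw f g a b (w.drop (n - m))))).card
        ≤ 2 ^ (n - m) * (Hs f g a b m).card := by
    intro m hm
    obtain ⟨hm3, hmn⟩ := Finset.mem_Icc.1 hm
    set s := (W n).filter (fun w => thr a b m < volume (Jw f g a b (w.drop (n - m)))) with hs
    have hmap : ∀ w ∈ s, w.drop (n - m) ∈ Hs f g a b m := by
      intro w hw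
      obtain ⟨hwW, hh⟩ := Finset.mem_filter.1 hw
      have hwl : w.length = n := mem_W.1 hwW
      refine Finset.mem_filter.2 ⟨mem_W.2 ?_, hh⟩
      simp [List.length_drop, hwl]
      omega
    have hcard : s.card ≤ 2 ^ (n - m) * (s.image (fun w => w.drop (n - m))).card := by
      apply Finset.card_le_mul_card_image
      intro v _
      -- fiber bound
      calc (s.filter (fun w => w.drop (n - m) = v)).card ≤ (W (n - m)).card := by
            apply Finset.card_le_card_of_injOn (fun w => w.take (n - m))
            · intro w hw
              obtain ⟨hws, _⟩ := Finset.mem_filter.1 hw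
              have hwl : w.length = n := mem_W.1 (Finset.mem_filter.1 hws).1
              refine mem_W.2 ?_
              simp [List.length_take, hwl]
            · intro w₁ h₁ w₂ h₂ htake
              have htake' : w₁.take (n - m) = w₂.take (n - m) := htake
              have e₁ : w₁.drop (n - m) = v :=
                (Finset.mem_filter.1 (Finset.mem_coe.1 h₁)).2
              have e₂ : w₂.drop (n - m) = v :=
                (Finset.mem_filter.1 (Finset.mem_coe.1 h₂)).2
              calc w₁ = w₁.take (n - m) ++ w₁.drop (n - m) := (List.take_append_drop _ _).symm
                _ = w₂.take (n - m) ++ w₂.drop (n - m) := by rw [htake', e₁, e₂]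
                _ = w₂ := List.take_append_drop _ _
        _ = 2 ^ (n - m) := card_W _
    have himg : (s.image (fun w => w.drop (n - m))).card ≤ (Hs f g a b m).card := by
      apply Finset.card_le_card
      intro v hv
      obtain ⟨w, hw, rfl⟩ := Finset.mem_image.1 hv
      exact hmap w hw
    calc s.card ≤ 2 ^ (n - m) * (s.image (fun w => w.drop (n - m))).card := hcard
      _ ≤ 2 ^ (n - m) * (Hs f g a b m).card := by
          exact Nat.mul_le_mul_left _ himg
  -- total bad count
  have hcount : (Bad.card : ℝ) < 2 ^ n := by
    have h1 : Bad.card ≤ ∑ m ∈ Finset.Icc 3 n, 2 ^ (n - m) * (Hs f g a b m).card :=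
      (Finset.card_le_card hsub).trans ((Finset.card_biUnion_le).trans
        (Finset.sum_le_sum hlev))
    have h2 : (Bad.card : ℝ) ≤ ∑ m ∈ Finset.Icc 3 n, (2 : ℝ) ^ (n - m) * (Hs f g a b m).card := by
      calc (Bad.card : ℝ) ≤ ((∑ m ∈ Finset.Icc 3 n, 2 ^ (n - m) * (Hs f g a b m).card : ℕ) : ℝ) :=
            Nat.cast_le.2 h1
        _ = ∑ m ∈ Finset.Icc 3 n, (2 : ℝ) ^ (n - m) * (Hs f g a b m).card := by push_cast; ring
    have h3 : ∑ m ∈ Finset.Icc 3 n, (2 : ℝ) ^ (n - m) * (Hs f g a b m).card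
        ≤ ∑ m ∈ Finset.Icc 3 n, (2 : ℝ) ^ n * (2 / 3) ^ m := by
      apply Finset.sum_le_sum
      intro m hm
      obtain ⟨hm3, hmn⟩ := Finset.mem_Icc.1 hm
      have hp : (2 : ℝ) ^ (n - m) * (4 / 3) ^ m = 2 ^ n * (2 / 3) ^ m := by
        have h2n : (2 : ℝ) ^ (n - m) * 2 ^ m = 2 ^ n := by
          rw [← pow_add]; congr 1; omega
        have : (2 : ℝ) ^ m * (2 / 3) ^ m = (4 / 3) ^ m := by
          rw [← mul_pow]; norm_num
        rw [← this, ← h2n]; ring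
      calc (2 : ℝ) ^ (n - m) * (Hs f g a b m).card ≤ (2 : ℝ) ^ (n - m) * (4 / 3) ^ m := by
            apply mul_le_mul_of_nonneg_left (card_Hs H m) (by positivity)
        _ = 2 ^ n * (2 / 3) ^ m := hp
    have h4 : ∑ m ∈ Finset.Icc 3 n, (2 : ℝ) ^ n * (2 / 3) ^ m ≤ 2 ^ n * (8 / 9) := by
      rw [← Finset.mul_sum]
      apply mul_le_mul_of_nonneg_left (sum_Icc_le n) (by positivity)
    have h5 : (0:ℝ) < 2 ^ n := by positivity
    linarith
  have hne : ∃ w ∈ W n, w ∉ Bad := by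
    by_contra hcon
    push_neg at hcon
    have : (W n).card ≤ Bad.card := Finset.card_le_card hcon
    rw [card_W] at this
    have h9 : ((2:ℝ)) ^ n ≤ (Bad.card : ℝ) := by exact_mod_cast this
    linarith
  obtain ⟨w, hwW, hwB⟩ := hne
  refine ⟨w, mem_W.1 hwW, ?_⟩
  by_contra hg
  exact hwB (Finset.mem_filter.2 ⟨hwW, hg⟩)

/-- extendibility -/
def Ext (f g : ℝ → ℝ) (a b : ℝ) (w : List Bool) : Prop :=
  ∀ n : ℕ, ∃ v : List Bool, v.length = n ∧ Good f g a b (v ++ w)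

lemma good_of_ext {w : List Bool} (h : Ext f g a b w) : Good f g a b w := by
  obtain ⟨v, hv, hg⟩ := h 0
  rw [List.length_eq_zero_iff] at hv
  simpa [hv] using hg

lemma ext_nil (H : Hyp a b f g) : Ext f g a b [] := by
  intro n
  obtain ⟨w, h1, h2⟩ := exists_good H n
  exact ⟨w, h1, by simpa using h2⟩

lemma ext_step (H : Hyp a b f g) {w : List Bool} (hw : Ext f g a b w) :
    ∃ x : Bool, Ext f g a b (x :: w) := by
  by_contra hcon
  push_neg at hcon
  have h' : ∀ x : Bool, ∃ n : ℕ, ∀ v : List Bool, v.length = n → ¬ Good f g a b (v ++ x :: w) := by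
    intro x
    have := hcon x
    rw [Ext] at this
    push_neg at this
    obtain ⟨n, hn⟩ := this
    exact ⟨n, fun v hv => (hn v hv)⟩
  obtain ⟨nt, hnt⟩ := h' true
  obtain ⟨nf, hnf⟩ := h' false
  set n := max nt nf
  obtain ⟨v, hvl, hvg⟩ := hw (n + 1)
  rcases v.eq_nil_or_concat' with rfl | ⟨u, x, rfl⟩
  · simp at hvl
  have hul : u.length = n := by simpa using hvl
  have hug : Good f g a b (u ++ (x :: w)) := by
    rwa [List.append_assoc, List.singleton_append] at hvg
  have key : ∀ (k : ℕ), k ≤ n → Good f g a b (u.drop k ++ (x :: w)) := by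
    intro k hk
    have := good_drop hug k
    rwa [List.drop_append_of_le_length (by omega)] at this
  cases x
  · have := key (n - nf) (by omega)
    exact hnf _ (by simp [List.length_drop, hul]; omega) this
  · have := key (n - nt) (by omega)
    exact hnt _ (by simp [List.length_drop, hul]; omega) this

/-- the König chain -/
def chain (H : Hyp a b f g) : ℕ → {w : List Bool // Ext f g a b w}
  | 0 => ⟨[], ext_nil H⟩
  | n + 1 => ⟨_, (ext_step H (chain H n).2).choose_spec⟩

lemma chain_len (H : Hyp a b f g) : ∀ n, (chain H n).1.length = n
  | 0 => rfl
  | n + 1 => by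
    show ((ext_step H (chain H n).2).choose :: (chain H n).1).length = n + 1
    simp [chain_len H n]

/-- the branch -/
def br (H : Hyp a b f g) (i : ℕ) : Bool := (ext_step H (chain H i).2).choose

def omg (H : Hyp a b f g) (i : ℕ) : ℝ → ℝ := mp f g (br H i)

lemma wordImage_eq (H : Hyp a b f g) :
    ∀ n, wordImage (omg H) (Icc a b) n = Jw f g a b (chain H n).1
  | 0 => rfl
  | n + 1 => by
    show omg H n '' wordImage (omg H) (Icc a b) n
        = Jw f g a b ((ext_step H (chain H n).2).choose :: (chain H n).1)
    rw [wordImage_eq H n]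
    rfl

lemma main_bound (H : Hyp a b f g) (n : ℕ) (hn : 3 ≤ n) :
    volume (wordImage (omg H) (Icc a b) n) ≤ ENNReal.ofReal ((b - a) * (3 / 4) ^ n) := by
  rw [wordImage_eq H n]
  have hg : Good f g a b (chain H n).1 := good_of_ext (chain H n).2
  have := hg 0 (by rw [chain_len H n]; omega)
  rw [List.drop_zero] at this
  rw [Light, chain_len H n] at this
  exact this

lemma vol_pos (H : Hyp a b f g) (n : ℕ) :
    0 < volume (wordImage (omg H) (Icc a b) n) ∧
      volume (wordImage (omg H) (Icc a b) n) ≠ ⊤ := by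
  rw [wordImage_eq H n]
  obtain ⟨c, d, hcd, _, _, hw⟩ := Jw_struct H (chain H n).1
  rw [hw, Real.volume_Icc]
  constructor
  · exact ENNReal.ofReal_pos.2 (by linarith)
  · exact ENNReal.ofReal_ne_top

end Stmt8

/-- if `f, g : I → I` are continuous and injective with disjoint images,
there is an infinite word in `f, g` whose images of `I` shrink at a uniform
exponential rate. -/
theorem stmt8 (a b : ℝ) (hab : a < b) (f g : ℝ → ℝ)
    (hfc : ContinuousOn f (Icc a b)) (hgc : ContinuousOn g (Icc a b))
    (hfi : InjOn f (Icc a b)) (hgi : InjOn g (Icc a b))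
    (hfm : MapsTo f (Icc a b) (Icc a b)) (hgm : MapsTo g (Icc a b) (Icc a b))
    (hdisj : Disjoint (f '' Icc a b) (g '' Icc a b)) :
    ∃ ω : ℕ → ℝ → ℝ, (∀ i, ω i = f ∨ ω i = g) ∧
      Filter.limsup (fun n : ℕ =>
          ((Real.log (MeasureTheory.volume (wordImage ω (Icc a b) n)).toReal / n : ℝ) : EReal))
        Filter.atTop < 0 := by
  have H : Stmt8.Hyp a b f g := ⟨hab, hfc, hgc, hfi, hgi, hfm, hgm, hdisj⟩
  refine ⟨Stmt8.omg H, ?_, ?_⟩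
  · intro i
    unfold Stmt8.omg Stmt8.mp
    cases Stmt8.br H i
    · right; rfl
    · left; rfl
  · -- the quantitative estimate
    set u : ℕ → ℝ := fun n =>
      Real.log (MeasureTheory.volume (wordImage (Stmt8.omg H) (Icc a b) n)).toReal / n with hu
    have hL : (0 : ℝ) < b - a := sub_pos.2 hab
    have hlog34 : Real.log (3 / 4) < 0 := Real.log_neg (by norm_num) (by norm_num)
    set δ : ℝ := -Real.log (3 / 4) / 2 with hδ
    have hδpos : 0 < δ := by rw [hδ]; linarith
    -- eventually u n ≤ log (3/4) / 2
    obtain ⟨M, hM⟩ := exists_nat_gt (|Real.log (b - a)| / δ)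
    have hev : ∀ n : ℕ, max 3 (M + 1) ≤ n → u n ≤ Real.log (3 / 4) / 2 := by
      intro n hn
      have hn3 : 3 ≤ n := le_trans (le_max_left _ _) hn
      have hnM : M + 1 ≤ n := le_trans (le_max_right _ _) hn
      have hnpos : (0 : ℝ) < n := by positivity
      have hb := Stmt8.main_bound H n hn3
      obtain ⟨hvpos, hvtop⟩ := Stmt8.vol_pos H n
      set t : ℝ := (MeasureTheory.volume (wordImage (Stmt8.omg H) (Icc a b) n)).toReal with ht
      have htpos : 0 < t := ENNReal.toReal_pos hvpos.ne' hvtop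
      have htle : t ≤ (b - a) * (3 / 4) ^ n := by
        rw [ht]
        have := ENNReal.toReal_mono ENNReal.ofReal_ne_top hb
        rwa [ENNReal.toReal_ofReal (by positivity)] at this
      have hlt : Real.log t ≤ Real.log (b - a) + n * Real.log (3 / 4) := by
        calc Real.log t ≤ Real.log ((b - a) * (3 / 4) ^ n) := Real.log_le_log htpos htle
          _ = Real.log (b - a) + n * Real.log (3 / 4) := by
              rw [Real.log_mul (by positivity) (by positivity), Real.log_pow]
      have hlogb : Real.log (b - a) ≤ |Real.log (b - a)| := le_abs_self _
      have hMn : |Real.log (b - a)| < n * δ := by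
        calc |Real.log (b - a)| < M * δ := by
              rw [div_lt_iff₀ hδpos] at hM
              exact hM
          _ ≤ n * δ := by
              apply mul_le_mul_of_nonneg_right _ hδpos.le
              exact_mod_cast (by omega : M ≤ n)
      have : u n = Real.log t / n := by rw [hu]
      rw [this, div_le_iff₀ hnpos]
      have : Real.log (3 / 4) / 2 * n = Real.log (b - a) + n * Real.log (3/4)
          + (- Real.log (b - a) + n * δ) := by
        rw [hδ]; ring
      rw [this]
      have h6 : - Real.log (b - a) + n * δ ≥ 0 := by
        have := abs_le.1 (le_refl |Real.log (b - a)|)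
        linarith [neg_abs_le (Real.log (b - a)), hMn]
      linarith
    have hev' : ∀ᶠ n : ℕ in atTop,
        ((u n : ℝ) : EReal) ≤ ((Real.log (3 / 4) / 2 : ℝ) : EReal) := by
      filter_upwards [eventually_ge_atTop (max 3 (M + 1))] with n hn
      exact_mod_cast EReal.coe_le_coe_iff.2 (hev n hn)
    have hls : Filter.limsup (fun n : ℕ => ((u n : ℝ) : EReal)) atTop
        ≤ ((Real.log (3 / 4) / 2 : ℝ) : EReal) :=
      limsup_le_of_le (by isBoundedDefault) hev'
    have hlt0 : ((Real.log (3 / 4) / 2 : ℝ) : EReal) < 0 := by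
      rw [← EReal.coe_zero, EReal.coe_lt_coe_iff]
      linarith
    exact lt_of_le_of_lt hls hlt0
end
end

section
/- Let g ∈ Homeo_+([0,1]). A homeomorphism h ∈ Homeo_+([0,1]) satisfies h(x) ∈ {x, g(x)} for all x if and only if there exists a family 𝓘 of connected components of [0,1] ∖ Fix(g) such that h equals g on the union of the intervals in 𝓘 and equals the identity elsewhere. -/
open Set Filter

noncomputable section

lemma fix_zero (g : Equiv.Perm ℝ) (hg : HomeoOnIcc g) : g 0 = 0 := by
  set y := g.symm 0 with hy
  have hgy : g y = 0 := g.apply_symm_apply 0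
  have hyI : y ∈ Icc (0:ℝ) 1 := by
    by_contra hc
    have := hg.1 y hc
    rw [this] at hgy
    exact hc (by rw [hgy]; exact ⟨le_refl 0, zero_le_one⟩)
  rcases eq_or_lt_of_le hyI.1 with h0 | h0
  · rw [← h0] at hgy; exact hgy
  · exfalso
    have h01 : (0:ℝ) ∈ Icc (0:ℝ) 1 := ⟨le_refl 0, zero_le_one⟩
    have := hg.2.2.1 h01 hyI h0
    rw [hgy] at this
    exact absurd (hg.2.1 h01).1 (not_le.2 this)

lemma fix_one (g : Equiv.Perm ℝ) (hg : HomeoOnIcc g) : g 1 = 1 := by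
  set y := g.symm 1 with hy
  have hgy : g y = 1 := g.apply_symm_apply 1
  have hyI : y ∈ Icc (0:ℝ) 1 := by
    by_contra hc
    have := hg.1 y hc
    rw [this] at hgy
    exact hc (by rw [hgy]; exact ⟨zero_le_one, le_refl 1⟩)
  rcases eq_or_lt_of_le hyI.2 with h1 | h1
  · rw [h1] at hgy; exact hgy
  · exfalso
    have h11 : (1:ℝ) ∈ Icc (0:ℝ) 1 := ⟨zero_le_one, le_refl 1⟩
    have := hg.2.2.1 hyI h11 h1
    rw [hgy] at this
    exact absurd (hg.2.1 h11).2 (not_le.2 this)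

lemma exists_comp (g : Equiv.Perm ℝ) (hg : HomeoOnIcc g) {x : ℝ} (hx : g x ≠ x) :
    ∃ a b : ℝ, IsCompFix g a b ∧ x ∈ Ioo a b := by
  have hxI : x ∈ Icc (0:ℝ) 1 := by
    by_contra hc; exact hx (hg.1 x hc)
  have hF : IsClosed {y | y ∈ Icc (0:ℝ) 1 ∧ g y - y = 0} := by
    have := (hg.2.2.2.sub continuousOn_id).preimage_isClosed_of_isClosed
      isClosed_Icc (isClosed_singleton (x := (0:ℝ)))
    exact this
  -- left endpoint
  set A : Set ℝ := {y | (y ∈ Icc (0:ℝ) 1 ∧ g y - y = 0) ∧ y ≤ x} with hA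
  have hAne : A.Nonempty := ⟨0, ⟨⟨le_refl 0, zero_le_one⟩, by simp [fix_zero g hg]⟩, hxI.1⟩
  have hAbdd : BddAbove A := ⟨x, fun y hy => hy.2⟩
  have hAcl : IsClosed A := by
    have : A = {y | y ∈ Icc (0:ℝ) 1 ∧ g y - y = 0} ∩ Iic x := by
      ext y; simp [hA, Set.mem_inter_iff, and_assoc]
    rw [this]; exact hF.inter isClosed_Iic
  set a := sSup A with ha
  have haA : a ∈ A := hAcl.csSup_mem hAne hAbdd
  have hax : a < x := lt_of_le_of_ne haA.2 (fun he => hx (by have := haA.1.2; rw [he] at this; linarith))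
  -- right endpoint
  set B : Set ℝ := {y | (y ∈ Icc (0:ℝ) 1 ∧ g y - y = 0) ∧ x ≤ y} with hB
  have hBne : B.Nonempty := ⟨1, ⟨⟨zero_le_one, le_refl 1⟩, by simp [fix_one g hg]⟩, hxI.2⟩
  have hBbdd : BddBelow B := ⟨x, fun y hy => hy.2⟩
  have hBcl : IsClosed B := by
    have : B = {y | y ∈ Icc (0:ℝ) 1 ∧ g y - y = 0} ∩ Ici x := by
      ext y; simp [hB, Set.mem_inter_iff, and_assoc]
    rw [this]; exact hF.inter isClosed_Ici
  set b := sInf B with hb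
  have hbB : b ∈ B := hBcl.csInf_mem hBne hBbdd
  have hxb : x < b := lt_of_le_of_ne' hbB.2 (fun he => hx (by have := hbB.1.2; rw [he] at this; linarith))
  refine ⟨a, b, ⟨haA.1.1, hbB.1.1, hax.trans hxb, by linarith [haA.1.2], by linarith [hbB.1.2],
    ?_⟩, hax, hxb⟩
  intro z hz hzfix
  have hzI : z ∈ Icc (0:ℝ) 1 := ⟨le_trans haA.1.1.1 hz.1.le, le_trans hz.2.le hbB.1.1.2⟩
  rcases le_or_gt z x with hzx | hzx
  · have : z ≤ a := le_csSup hAbdd ⟨⟨hzI, by rw [hzfix]; ring⟩, hzx⟩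
    linarith [hz.1]
  · have : b ≤ z := csInf_le hBbdd ⟨⟨hzI, by rw [hzfix]; ring⟩, hzx.le⟩
    linarith [hz.2]

/-- `h` satisfies `h x ∈ {x, g x}` for all `x` iff `h` equals `g`
on the union of a family of connected components of `[0,1] ∖ Fix g` and the
identity elsewhere. -/
theorem stmt11 (g h : Equiv.Perm ℝ) (hg : HomeoOnIcc g) (hh : HomeoOnIcc h) :
    (∀ x : ℝ, h x = x ∨ h x = g x) ↔
    ∃ 𝓘 : Set (ℝ × ℝ), (∀ p ∈ 𝓘, IsCompFix g p.1 p.2) ∧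
      (∀ x : ℝ, (∃ p ∈ 𝓘, x ∈ Ioo p.1 p.2) → h x = g x) ∧
      (∀ x : ℝ, (¬ ∃ p ∈ 𝓘, x ∈ Ioo p.1 p.2) → h x = x) := by
  constructor
  · intro H
    refine ⟨{p | IsCompFix g p.1 p.2 ∧ ∃ y ∈ Ioo p.1 p.2, h y ≠ y}, fun p hp => hp.1, ?_, ?_⟩
    · rintro x ⟨⟨a, b⟩, ⟨hcomp, y, hyIoo, hyne⟩, hxIoo⟩
      -- connectedness argument on Ioo a b
      have hsubI : Ioo a b ⊆ Icc (0:ℝ) 1 :=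
        (Ioo_subset_Icc_self).trans (Icc_subset_Icc hcomp.1.1 hcomp.2.1.2)
      set S : Set ℝ := {z | z ∈ Ioo a b ∧ h z ≠ g z} with hS
      set T : Set ℝ := {z | z ∈ Ioo a b ∧ h z ≠ z} with hT
      have hcont : ∀ (f : Equiv.Perm ℝ), HomeoOnIcc f → ContinuousOn (⇑f) (Ioo a b) :=
        fun f hf => hf.2.2.2.mono hsubI
      have hSopen : IsOpen S := by
        rw [isOpen_iff_mem_nhds]
        rintro z ⟨hzIoo, hzne⟩
        have h1 : ContinuousAt (fun w => h w - g w) z :=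
          (((hcont h hh).sub (hcont g hg)) z hzIoo).continuousAt
            (isOpen_Ioo.mem_nhds hzIoo)
        have h2 : ∀ᶠ w in nhds z, h w - g w ≠ 0 :=
          h1.eventually_ne (sub_ne_zero.2 hzne)
        filter_upwards [h2, isOpen_Ioo.mem_nhds hzIoo] with w hw1 hw2
        exact ⟨hw2, sub_ne_zero.1 hw1⟩
      have hTopen : IsOpen T := by
        rw [isOpen_iff_mem_nhds]
        rintro z ⟨hzIoo, hzne⟩
        have h1 : ContinuousAt (fun w => h w - w) z :=
          (((hcont h hh).sub continuousOn_id) z hzIoo).continuousAt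
            (isOpen_Ioo.mem_nhds hzIoo)
        have h2 : ∀ᶠ w in nhds z, h w - w ≠ 0 :=
          h1.eventually_ne (sub_ne_zero.2 hzne)
        filter_upwards [h2, isOpen_Ioo.mem_nhds hzIoo] with w hw1 hw2
        exact ⟨hw2, sub_ne_zero.1 hw1⟩
      have hdisj : Disjoint S T := by
        rw [Set.disjoint_left]
        rintro z ⟨_, hz1⟩ ⟨_, hz2⟩
        rcases H z with hc | hc
        · exact hz2 hc
        · exact hz1 hc
      have hcover : Ioo a b ⊆ S ∪ T := by
        intro z hz
        rcases H z with hc | hc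
        · exact Or.inl ⟨hz, by rw [hc]; exact (hcomp.2.2.2.2.2 z hz).symm⟩
        · exact Or.inr ⟨hz, by rw [hc]; exact hcomp.2.2.2.2.2 z hz⟩
      rcases (isPreconnected_Ioo).subset_or_subset hSopen hTopen hdisj hcover with hc | hc
      · exfalso
        have := (hc hyIoo).2
        rcases H y with hy2 | hy2
        · exact hyne hy2
        · exact this hy2
      · have := (hc hxIoo).2
        rcases H x with hx2 | hx2
        · exact absurd hx2 this
        · exact hx2
    · intro x hx
      rcases H x with hc | hc
      · exact hc
      · by_cases hgx : g x = x
        · rw [hc, hgx]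
        · exfalso
          obtain ⟨a, b, hcomp, hxIoo⟩ := exists_comp g hg hgx
          exact hx ⟨(a, b), ⟨hcomp, x, hxIoo, by rw [hc]; exact hgx⟩, hxIoo⟩
  · intro ⟨I, hI1, hI2, hI3⟩ x
    by_cases hx : ∃ p ∈ I, x ∈ Ioo p.1 p.2
    · exact Or.inr (hI2 x hx)
    · exact Or.inl (hI3 x hx)
end
end
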